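/- arXiv:1110.6530 — 2 statements merged into one kernel-verified Lean document; each statement's English description precedes it below -/
import Mathlib

section
/- Let P be a regular probability kernel on the finite alphabet A and let X be a stationary chain compatible with P that satisfies concentration of measure at exponential rate. Then X is the unique stationary chain compatible with P. -/
set_option linter.unusedSectionVars false
set_option linter.unusedVariables false
set_option maxHeartbeats 1000000


open MeasureTheory ProbabilityTheory Filter ENNReal

namespace GT

/-- The set of pasts: `x i` represents the symbol `x_{-(i+1)}`. -/
abbrev Past (A : Type*) := ℕ → A

variable {A : Type*} [Fintype A] [MeasurableSpace A]

/-- The past of a bi-infinite trajectory: `past ω i = ω (-(i+1))`. -/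
def past (ω : ℤ → A) : Past A := fun i => ω (-((i : ℤ) + 1))

/-- The left shift on bi-infinite sequences. -/
def shift (ω : ℤ → A) : ℤ → A := fun n => ω (n + 1)

/-- Shift invariance (stationarity) of a measure on `A^ℤ`. -/
def ShiftInvariant (μ : Measure (ℤ → A)) : Prop := μ.map shift = μ

/-- `P` is a (measurable) probability kernel on the alphabet `A`. -/
def IsProbKernel (P : A → Past A → ℝ) : Prop :=
  (∀ a, Measurable (P a)) ∧ (∀ a x, 0 ≤ P a x) ∧ ∀ x, ∑ a, P a x = 1

/-- `μ` is compatible with the kernel `P`: `P` is a regular version of the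
conditional probabilities of `μ` given the past. -/
def Compatible (P : A → Past A → ℝ) (μ : Measure (ℤ → A)) : Prop :=
  ∀ (a : A) (B : Set (Past A)), MeasurableSet B →
    (μ {ω | ω 0 = a ∧ past ω ∈ B}).toReal = ∫ ω in past ⁻¹' B, P a (past ω) ∂μ

/-- A stationary chain compatible with `P`. -/
def StatChain (P : A → Past A → ℝ) (μ : Measure (ℤ → A)) : Prop :=
  IsProbabilityMeasure μ ∧ ShiftInvariant μ ∧ Compatible P μ

/-- The continuity rate (variation) of order `k` of the kernel `P`. -/
noncomputable def varRate (P : A → Past A → ℝ) (k : ℕ) : ℝ :=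
  sSup {d | ∃ (b : A) (x y : Past A), (∀ i < k, x i = y i) ∧ d = |P b x - P b y|}

/-- A kernel is continuous if its continuity rate tends to `0`. -/
def ContinuousKernel (P : A → Past A → ℝ) : Prop :=
  Tendsto (varRate P) atTop (nhds 0)

/-- Strong non-nullness of a kernel. -/
def StronglyNonNull (P : A → Past A → ℝ) : Prop := ∃ δ > 0, ∀ a x, δ ≤ P a x

/-- A regular kernel: continuous and strongly non-null. -/
def RegularKernel (P : A → Past A → ℝ) : Prop := ContinuousKernel P ∧ StronglyNonNull P

/-- Attractiveness: for every `a`, `x ↦ ∑_{b ≥ a} P(b|x)` is nondecreasing for the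
coordinatewise partial order on pasts. -/
def Attractive [LinearOrder A] (P : A → Past A → ℝ) : Prop :=
  ∀ a : A, Monotone fun x : Past A => ∑ b ∈ Finset.univ.filter (fun b => a ≤ b), P b x

/-- The word `(X_1, …, X_n)` read off from a trajectory `ω`. -/
def word (n : ℕ) (ω : ℤ → A) : Fin n → A := fun j => ω (((j : ℕ) : ℤ) + 1)

/-- `δ_j f`: the oscillation of `f` along the `j`-th coordinate. -/
noncomputable def deltaj {n : ℕ} (f : (Fin n → A) → ℝ) (j : Fin n) : ℝ :=
  sSup {d | ∃ a b : Fin n → A, (∀ i, i ≠ j → a i = b i) ∧ d = |f a - f b|}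

/-- `‖δf‖_{ℓ1}`. -/
noncomputable def delta1 {n : ℕ} (f : (Fin n → A) → ℝ) : ℝ := ∑ j, deltaj f j

/-- `‖δf‖_{ℓ2}²`. -/
noncomputable def delta2sq {n : ℕ} (f : (Fin n → A) → ℝ) : ℝ := ∑ j, (deltaj f j) ^ 2

/-- Concentration of measure at exponential rate for the stationary law `μ`. -/
def ConcExpRate (μ : Measure (ℤ → A)) : Prop :=
  ∃ (C : ℝ) (g : ℝ → ℝ → ℝ), (∀ ε t, 0 < ε → 0 < t → 0 < g ε t) ∧
    ∀ (n : ℕ), 1 ≤ n → ∀ (f : (Fin n → A) → ℝ) (ε : ℝ), 0 < ε →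
      (μ {ω | ε < |f (word n ω) - ∫ ω', f (word n ω') ∂μ|}).toReal ≤
        C * Real.exp (-(g ε (delta1 f)) / delta2sq f)

/-- `ℙ` is the law of an i.i.d. process indexed by `ℤ`. -/
def IsIID {U : Type*} [MeasurableSpace U] (P : Measure (ℤ → U)) : Prop :=
  IsProbabilityMeasure P ∧
  iIndepFun (fun (i : ℤ) (u : ℤ → U) => u i) P ∧
  ∀ i : ℤ, P.map (fun u => u i) = P.map (fun u => u 0)

/-- A finitary coding of the process with law `ℙ` onto the process with law `μ`:
a shift-equivariant measurable factor map together with a.s. finite stopping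
times `θ₁` (into the past) and `θ₂` (into the future) such that the zeroth output
symbol only depends on the coordinates in the window `[-θ₁, θ₂]`. -/
structure FinitaryCoding {U : Type*} [MeasurableSpace U]
    (μ : Measure (ℤ → A)) (P : Measure (ℤ → U)) where
  Φ : (ℤ → U) → ℤ → A
  meas : Measurable Φ
  equivariant : ∀ (u : ℤ → U) (n : ℤ), Φ (fun m => u (m + 1)) n = Φ u (n + 1)
  map_eq : P.map Φ = μ
  θ₁ : (ℤ → U) → ℕ∞
  θ₂ : (ℤ → U) → ℕ∞
  meas_theta : ∀ k l : ℕ∞, MeasurableSet {u | θ₁ u = k ∧ θ₂ u = l}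
  finite_ae : P {u | θ₁ u = ⊤ ∨ θ₂ u = ⊤} = 0
  window : ∀ (k l : ℕ) (u v : ℤ → U),
      (∀ j : ℤ, -(k : ℤ) ≤ j → j ≤ (l : ℤ) → u j = v j) →
      θ₁ u = (k : ℕ∞) → θ₂ u = (l : ℕ∞) → θ₁ v = (k : ℕ∞) ∧ θ₂ v = (l : ℕ∞)
  localize : ∀ u v : ℤ → U,
      (∀ j : ℤ, ((j.natAbs : ℕ∞) ≤ if j < 0 then θ₁ u else θ₂ u) → u j = v j) →
      Φ u 0 = Φ v 0

/-- The new past obtained by appending the freshly generated symbol `a`. -/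
def consPast (a : A) (x : Past A) : Past A := fun i =>
  match i with
  | 0 => a
  | j + 1 => x j

/-- The probability that the fixed-past chain with past `x` produces the word `w`
(first element of `w` generated first). -/
noncomputable def wordProb (P : A → Past A → ℝ) : Past A → List A → ℝ
  | _, [] => 1
  | x, a :: w => P a x * wordProb P (consPast a x) w

/-- `ℙ(X_{j+1}^x … X_{j+|w|}^x = w)`: the law of the fixed-past chain shifted by `j`. -/
noncomputable def shiftedCylProb (P : A → Past A → ℝ) (x : Past A) (j : ℕ) (w : List A) : ℝ :=
  ∑ u : Fin j → A, wordProb P x (List.ofFn u ++ w)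

/-- The cylinder set `{ω : ω_1 … ω_n = w}` (coordinates `1, …, |w|`). -/
def cylFrom1 (w : List A) : Set (ℤ → A) :=
  {ω | ∀ i : Fin w.length, ω (((i : ℕ) : ℤ) + 1) = w.get i}


-- ### new defs
def rpast (ω : ℤ → A) : Past A := fun i => ω (-(i : ℤ))
def zshift (t : ℤ) (ω : ℤ → A) : ℤ → A := fun n => ω (n + t)
def pastN (n : ℕ) (ω : ℤ → A) : Past A := fun i => ω (-(n : ℤ) - i)

lemma measurable_past : Measurable (past (A := A)) :=
  measurable_pi_lambda _ fun i => measurable_pi_apply _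

lemma measurable_rpast : Measurable (rpast (A := A)) :=
  measurable_pi_lambda _ fun i => measurable_pi_apply _

lemma measurable_pastN (n : ℕ) : Measurable (pastN (A := A) n) :=
  measurable_pi_lambda _ fun i => measurable_pi_apply _

lemma measurable_zshift (t : ℤ) : Measurable (zshift (A := A) t) :=
  measurable_pi_lambda _ fun i => measurable_pi_apply _

lemma measurable_shift : Measurable (shift (A := A)) :=
  measurable_pi_lambda _ fun i => measurable_pi_apply _

lemma zshift_comp (t s : ℤ) : zshift (A := A) t ∘ zshift s = zshift (t + s) := by
  funext ω n; simp [zshift, add_assoc]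

lemma shift_eq_zshift_one : (shift : (ℤ → A) → ℤ → A) = zshift 1 := rfl

lemma map_zshift {μ : Measure (ℤ → A)} (h : ShiftInvariant μ) (t : ℤ) :
    μ.map (zshift t) = μ := by
  induction t using Int.induction_on with
  | zero => have : zshift (A := A) 0 = id := by funext ω n; simp [zshift]
            rw [this, Measure.map_id]
  | succ k ih =>
      have : zshift (A := A) (k + 1) = zshift k ∘ zshift 1 := (zshift_comp k 1).symm
      rw [this, ← Measure.map_map (measurable_zshift k) (measurable_zshift 1),
        ← shift_eq_zshift_one, h, ih]
  | pred k ih =>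
      have h1 : μ.map (zshift (-1)) = μ := by
        have hc : zshift (A := A) (-1) ∘ shift = id := by funext ω n; simp [zshift, shift]
        conv_lhs => rw [← h]
        rw [Measure.map_map (measurable_zshift (-1)) measurable_shift, hc, Measure.map_id]
      have : zshift (A := A) (-k - 1) = zshift (-k) ∘ zshift (-1) := by
        rw [zshift_comp]; ring_nf
      rw [this, ← Measure.map_map (measurable_zshift (-k)) (measurable_zshift (-1)),
        h1, ih]

lemma zshift_invariance {μ : Measure (ℤ → A)} (h : ShiftInvariant μ) (t : ℤ)
    {E : Set (ℤ → A)} (hE : MeasurableSet E) : μ (zshift t ⁻¹' E) = μ E := by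
  conv_rhs => rw [← map_zshift h t]
  rw [Measure.map_apply (measurable_zshift t) hE]

-- ### Part 1 : separation of points

/-- The measurable atom of a point. -/
def matom (a : A) : Set A := ⋂₀ {S : Set A | MeasurableSet S ∧ a ∈ S}

lemma measurableSet_matom (a : A) : MeasurableSet (matom a) := by
  haveI : Finite (Set A) := inferInstance
  exact MeasurableSet.sInter (Set.to_countable _) (fun t ht => ht.1)

lemma mem_matom_self (a : A) : a ∈ matom a := fun S hS => hS.2

lemma mem_matom_iff {a b : A} : b ∈ matom a ↔ ∀ S : Set A, MeasurableSet S → (a ∈ S ↔ b ∈ S) := by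
  constructor
  · intro hb S hS
    constructor
    · intro ha; exact hb S ⟨hS, ha⟩
    · intro hbS; by_contra ha
      exact (hb Sᶜ ⟨hS.compl, ha⟩) hbS
  · intro h S hS; exact (h S hS.1).1 hS.2

/-- Measurable sets in the product are saturated w.r.t. measurable atoms. -/
lemma measurable_saturated {t : Set (ℤ → A)} (ht : MeasurableSet t) :
    ∀ (ω : ℤ → A) (c : A) (j : ℤ), (∀ S : Set A, MeasurableSet S → (c ∈ S ↔ ω j ∈ S)) →
      (Function.update ω j c ∈ t ↔ ω ∈ t) := by
  let m' : MeasurableSpace (ℤ → A) :=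
    { MeasurableSet' := fun t => ∀ (ω : ℤ → A) (c : A) (j : ℤ),
        (∀ S : Set A, MeasurableSet S → (c ∈ S ↔ ω j ∈ S)) →
        (Function.update ω j c ∈ t ↔ ω ∈ t)
      measurableSet_empty := by intro ω c j h; simp
      measurableSet_compl := by
        intro s hs ω c j h
        simp only [Set.mem_compl_iff]
        rw [hs ω c j h]
      measurableSet_iUnion := by
        intro f hf ω c j h
        simp only [Set.mem_iUnion]
        exact exists_congr fun i => hf i ω c j h }
  have hle : (MeasurableSpace.pi : MeasurableSpace (ℤ → A)) ≤ m' := by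
    rw [MeasurableSpace.pi]
    refine iSup_le fun i => ?_
    intro s hs
    obtain ⟨s', hs', rfl⟩ := hs
    intro ω c j h
    simp only [Set.mem_preimage]
    by_cases hij : i = j
    · subst hij
      rw [Function.update_self]
      exact h s' hs'
    · rw [Function.update_of_ne (Ne.symm (by exact fun hh => hij hh.symm) )]
  exact hle t ht

lemma P_le_one {P : A → Past A → ℝ} (hker : IsProbKernel P) (a : A) (x : Past A) :
    P a x ≤ 1 := by
  have := hker.2.2 x
  calc P a x ≤ ∑ c, P c x := Finset.single_le_sum (fun c _ => hker.2.1 c x) (Finset.mem_univ a)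
  _ = 1 := this

lemma integrable_P_past {P : A → Past A → ℝ} (hker : IsProbKernel P)
    {μ : Measure (ℤ → A)} [IsFiniteMeasure μ] (a : A) :
    Integrable (fun ω => P a (past ω)) μ := by
  refine Integrable.mono' (integrable_const 1) ?_ ?_
  · exact ((hker.1 a).comp measurable_past).aestronglyMeasurable
  · refine Filter.Eventually.of_forall fun ω => ?_
    rw [Real.norm_eq_abs, abs_of_nonneg (hker.2.1 a _)]
    exact P_le_one hker a _

lemma singletons_measurable (P : A → Past A → ℝ) (hker : IsProbKernel P)
    {δ : ℝ} (hδ : 0 < δ) (hδP : ∀ a x, δ ≤ P a x)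
    {μ : Measure (ℤ → A)} (hμ : StatChain P μ) (a : A) :
    MeasurableSet ({a} : Set A) := by
  classical
  haveI : IsProbabilityMeasure μ := hμ.1
  by_contra hns
  -- there is `b ≠ a` in the atom of `a`
  obtain ⟨b, hb, hba⟩ : ∃ b, b ∈ matom a ∧ b ≠ a := by
    by_contra hall
    push_neg at hall
    have : matom a = {a} := by
      apply Set.Subset.antisymm
      · intro x hx; exact hall x hx
      · intro x hx; rw [Set.mem_singleton_iff] at hx; rw [hx]; exact mem_matom_self a
    exact hns (this ▸ measurableSet_matom a)
  -- the outer measure of `{ω 0 = c}` is the measure of `{ω 0 ∈ matom c}`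
  have hull : ∀ c : A, μ {ω | ω 0 = c ∧ past ω ∈ (Set.univ : Set (Past A))}
      = μ {ω : ℤ → A | ω 0 ∈ matom c} := by
    intro c
    have hEc : {ω : ℤ → A | ω 0 = c ∧ past ω ∈ (Set.univ : Set (Past A))} = {ω | ω 0 = c} := by
      ext ω; simp
    rw [hEc]
    apply le_antisymm
    · exact measure_mono (fun ω hω => by rw [Set.mem_setOf_eq] at hω ⊢; rw [hω]; exact mem_matom_self c)
    · rw [measure_eq_iInf {ω : ℤ → A | ω 0 = c}]
      refine le_iInf fun t => le_iInf fun hsub => le_iInf fun hmeas => measure_mono ?_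
      intro ω hω
      rw [Set.mem_setOf_eq] at hω
      have h' : ∀ S : Set A, MeasurableSet S → (c ∈ S ↔ ω 0 ∈ S) := mem_matom_iff.mp hω
      have hupd : Function.update ω 0 c ∈ t := by
        apply hsub
        rw [Set.mem_setOf_eq, Function.update_self]
      exact (measurable_saturated hmeas ω c 0 h').mp hupd
  -- compatibility at `B = univ`
  have compat : ∀ c : A, (μ {ω : ℤ → A | ω 0 ∈ matom c}).toReal = ∫ ω, P c (past ω) ∂μ := by
    intro c
    rw [← hull c, hμ.2.2 c Set.univ MeasurableSet.univ]
    simp [Measure.restrict_univ]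
  -- the total sum is 1
  have hsum : ∑ c : A, (μ {ω : ℤ → A | ω 0 ∈ matom c}).toReal = 1 := by
    have : ∑ c : A, ∫ ω, P c (past ω) ∂μ = ∫ ω, ∑ c : A, P c (past ω) ∂μ :=
      (integral_finset_sum _ (fun c _ => integrable_P_past hker c)).symm
    simp_rw [compat, this, hker.2.2]
    simp
  -- lower bounds
  have hterm : ∀ c : A, δ ≤ (μ {ω : ℤ → A | ω 0 ∈ matom c}).toReal := by
    intro c
    rw [compat c]
    calc δ = ∫ _ω, δ ∂μ := by simp
    _ ≤ ∫ ω, P c (past ω) ∂μ :=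
        integral_mono (integrable_const δ) (integrable_P_past hker c) (fun ω => hδP c _)
  have hcover : (Set.univ : Set (ℤ → A)) ⊆ ⋃ c ∈ Finset.univ.erase b, {ω : ℤ → A | ω 0 ∈ matom c} := by
    intro ω _
    by_cases hωb : ω 0 = b
    · refine Set.mem_biUnion (Finset.mem_erase.mpr ⟨Ne.symm hba, Finset.mem_univ a⟩) ?_
      rw [Set.mem_setOf_eq, hωb]; exact hb
    · exact Set.mem_biUnion (Finset.mem_erase.mpr ⟨hωb, Finset.mem_univ _⟩) (mem_matom_self (ω 0))
  have herase : (1:ℝ) ≤ ∑ c ∈ Finset.univ.erase b, (μ {ω : ℤ → A | ω 0 ∈ matom c}).toReal := by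
    have h1 : μ (Set.univ : Set (ℤ → A)) ≤ ∑ c ∈ Finset.univ.erase b, μ {ω : ℤ → A | ω 0 ∈ matom c} :=
      le_trans (measure_mono hcover) (measure_biUnion_finset_le _ _)
    have h2 : (μ (Set.univ : Set (ℤ → A))).toReal
        ≤ (∑ c ∈ Finset.univ.erase b, μ {ω : ℤ → A | ω 0 ∈ matom c}).toReal := by
      apply ENNReal.toReal_mono _ h1
      exact ENNReal.sum_ne_top.mpr (fun c _ => measure_ne_top μ _)
    rw [measure_univ, ENNReal.toReal_one, ENNReal.toReal_sum (fun c _ => measure_ne_top μ _)] at h2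
    exact h2
  have : (1:ℝ) ≥ 1 + δ := by
    calc (1:ℝ) = ∑ c : A, (μ {ω : ℤ → A | ω 0 ∈ matom c}).toReal := hsum.symm
    _ = ∑ c ∈ Finset.univ.erase b, (μ {ω : ℤ → A | ω 0 ∈ matom c}).toReal
        + (μ {ω : ℤ → A | ω 0 ∈ matom b}).toReal := (Finset.sum_erase_add _ _ (Finset.mem_univ b)).symm
    _ ≥ 1 + δ := add_le_add herase (hterm b)
  linarith

-- ### Part 2 : chain rule machinery

def tailPast (x : Past A) : Past A := fun i => x (i + 1)

def paste : List A → Past A → Past A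
  | [], x => x
  | a :: w, x => consPast a (paste w x)

noncomputable def pE (P : A → Past A → ℝ) (a : A) (x : Past A) : ℝ≥0∞ :=
  ENNReal.ofReal (P a x)

noncomputable def prodP (P : A → Past A → ℝ) : List A → Past A → ℝ≥0∞
  | [], _ => 1
  | a :: w, x => pE P a (paste w x) * prodP P w x

def cylPast : List A → Set (Past A)
  | [] => Set.univ
  | a :: w => {x | x 0 = a ∧ tailPast x ∈ cylPast w}

lemma measurable_consPast (a : A) : Measurable (consPast (A := A) a) := by
  apply measurable_pi_lambda
  intro i
  match i with
  | 0 => exact measurable_const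
  | j + 1 => exact measurable_pi_apply j

lemma measurable_tailPast : Measurable (tailPast (A := A)) :=
  measurable_pi_lambda _ fun i => measurable_pi_apply _

lemma measurable_paste (w : List A) : Measurable (paste (A := A) w) := by
  induction w with
  | nil => exact measurable_id
  | cons a w ih => exact (measurable_consPast a).comp ih

lemma measurable_pE {P : A → Past A → ℝ} (hker : IsProbKernel P) (a : A) :
    Measurable (pE P a) := (hker.1 a).ennreal_ofReal

lemma measurable_prodP {P : A → Past A → ℝ} (hker : IsProbKernel P) (w : List A) :
    Measurable (prodP P w) := by
  induction w with
  | nil => exact measurable_const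
  | cons a w ih => exact ((measurable_pE hker a).comp (measurable_paste w)).mul ih

lemma measurableSet_cylPast [MeasurableSingletonClass A] (w : List A) :
    MeasurableSet (cylPast w) := by
  induction w with
  | nil => exact MeasurableSet.univ
  | cons a w ih =>
      have h1 : MeasurableSet {x : Past A | x 0 = a} := by
        have he : {x : Past A | x 0 = a} = (fun x : Past A => x 0) ⁻¹' {a} := by ext x; simp
        rw [he]; exact (measurable_pi_apply 0) (measurableSet_singleton a)
      have h2 : MeasurableSet (tailPast ⁻¹' cylPast w) := measurable_tailPast ih
      exact h1.inter h2

lemma pE_le_one {P : A → Past A → ℝ} (hker : IsProbKernel P) (a : A) (x : Past A) :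
    pE P a x ≤ 1 := by
  rw [pE, ← ENNReal.ofReal_one]
  exact ENNReal.ofReal_le_ofReal (P_le_one hker a x)

lemma pastN_zero : pastN (A := A) 0 = rpast := by
  funext ω i; simp [pastN, rpast]

lemma pastN_succ_zshift (n : ℕ) : pastN (A := A) n = pastN (n + 1) ∘ zshift 1 := by
  funext ω i
  simp only [pastN, zshift, Function.comp_apply]
  congr 1
  push_cast
  ring

lemma past_eq_rpast_zshift : (past : (ℤ → A) → Past A) = rpast ∘ zshift (-1) := by
  funext ω i
  simp only [past, rpast, zshift, Function.comp_apply]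
  congr 1
  ring

lemma map_rpast_eq_map_past {μ : Measure (ℤ → A)} (h : ShiftInvariant μ) :
    μ.map past = μ.map rpast := by
  rw [past_eq_rpast_zshift, ← Measure.map_map measurable_rpast (measurable_zshift (-1)),
    map_zshift h]

lemma map_pastN_eq_map_rpast {μ : Measure (ℤ → A)} (h : ShiftInvariant μ) (n : ℕ) :
    μ.map (pastN n) = μ.map rpast := by
  induction n with
  | zero => rw [pastN_zero]
  | succ n ih =>
      rw [← ih, pastN_succ_zshift n,
        ← Measure.map_map (measurable_pastN (n+1)) (measurable_zshift 1), map_zshift h]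

/-- Change of variables between the various "past" maps. -/
lemma lintegral_comp_congr {μ : Measure (ℤ → A)} {f g : (ℤ → A) → Past A}
    (hf : Measurable f) (hg : Measurable g) (hmap : μ.map f = μ.map g)
    {K : Past A → ℝ≥0∞} (hK : Measurable K) :
    ∫⁻ ω, K (f ω) ∂μ = ∫⁻ ω, K (g ω) ∂μ := by
  rw [← lintegral_map hK hf, ← lintegral_map hK hg, hmap]

section Upgrade

variable [MeasurableSingletonClass A] {P : A → Past A → ℝ} {μ : Measure (ℤ → A)}

lemma measurableSet_eq_zero (a : A) : MeasurableSet {ω : ℤ → A | ω 0 = a} := by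
  have he : {ω : ℤ → A | ω 0 = a} = (fun ω : ℤ → A => ω 0) ⁻¹' {a} := by ext ω; simp
  rw [he]; exact (measurable_pi_apply 0) (measurableSet_singleton a)

lemma key_measure_eq (hker : IsProbKernel P) [IsProbabilityMeasure μ]
    (hc : Compatible P μ) (a : A) :
    (μ.restrict {ω | ω 0 = a}).map past
      = (μ.withDensity (fun ω => pE P a (past ω))).map past := by
  apply Measure.ext
  intro B hB
  rw [Measure.map_apply measurable_past hB, Measure.map_apply measurable_past hB,
    Measure.restrict_apply (measurable_past hB), withDensity_apply _ (measurable_past hB)]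
  have hset : {ω : ℤ → A | ω 0 = a ∧ past ω ∈ B} = past ⁻¹' B ∩ {ω | ω 0 = a} := by
    ext ω; simp [Set.mem_setOf_eq, and_comm]
  have hcomp := hc a B hB
  rw [hset] at hcomp
  have hbochner : ∫ ω in past ⁻¹' B, P a (past ω) ∂μ
      = (∫⁻ ω in past ⁻¹' B, pE P a (past ω) ∂μ).toReal := by
    rw [integral_eq_lintegral_of_nonneg_ae]
    · rfl
    · exact Filter.Eventually.of_forall fun ω => hker.2.1 a _
    · exact ((hker.1 a).comp measurable_past).aestronglyMeasurable
  rw [hbochner] at hcomp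
  have hfin1 : μ (past ⁻¹' B ∩ {ω | ω 0 = a}) ≠ ⊤ := measure_ne_top μ _
  have hfin2 : ∫⁻ ω in past ⁻¹' B, pE P a (past ω) ∂μ ≠ ⊤ := by
    have hb : ∫⁻ ω in past ⁻¹' B, pE P a (past ω) ∂μ ≤ μ (past ⁻¹' B) := by
      calc ∫⁻ ω in past ⁻¹' B, pE P a (past ω) ∂μ
          ≤ ∫⁻ _ω in past ⁻¹' B, 1 ∂μ := lintegral_mono fun ω => pE_le_one hker a _
      _ = μ (past ⁻¹' B) := by simp
    exact ne_of_lt (lt_of_le_of_lt (le_trans hb (measure_mono (Set.subset_univ _)))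
      (by rw [measure_univ]; exact ENNReal.one_lt_top))
  exact (ENNReal.toReal_eq_toReal_iff' hfin1 hfin2).mp hcomp

lemma upgrade (hker : IsProbKernel P) [IsProbabilityMeasure μ]
    (hc : Compatible P μ) (a : A) {g : Past A → ℝ≥0∞} (hg : Measurable g) :
    ∫⁻ ω in {ω | ω 0 = a}, g (past ω) ∂μ = ∫⁻ ω, pE P a (past ω) * g (past ω) ∂μ := by
  have h1 : ∫⁻ ω in {ω | ω 0 = a}, g (past ω) ∂μ
      = ∫⁻ x, g x ∂((μ.restrict {ω | ω 0 = a}).map past) :=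
    (lintegral_map hg measurable_past).symm
  have h2 : ∫⁻ x, g x ∂((μ.withDensity (fun ω => pE P a (past ω))).map past)
      = ∫⁻ ω, g (past ω) ∂(μ.withDensity (fun ω => pE P a (past ω))) :=
    lintegral_map hg measurable_past
  have hf' : Measurable fun ω : ℤ → A => pE P a (past ω) :=
    (measurable_pE hker a).comp measurable_past
  have hg' : Measurable fun ω : ℤ → A => g (past ω) := hg.comp measurable_past
  rw [h1, key_measure_eq hker hc a, h2,
    lintegral_withDensity_eq_lintegral_mul μ hf' hg']
  rfl

end Upgrade

section ChainRule

variable [MeasurableSingletonClass A] {P : A → Past A → ℝ}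

lemma tailPast_rpast (ω : ℤ → A) : tailPast (rpast ω) = past ω := by
  funext i
  show ω (-((i + 1 : ℕ) : ℤ)) = ω (-((i : ℤ) + 1))
  push_cast
  ring_nf

lemma rpast_zero (ω : ℤ → A) : rpast ω 0 = ω 0 := by simp [rpast]

lemma consPast_past {a : A} {ω : ℤ → A} (h : ω 0 = a) : consPast a (past ω) = rpast ω := by
  funext i
  match i with
  | 0 => simp [consPast, rpast, h]
  | j + 1 =>
      show ω (-((j : ℤ) + 1)) = ω (-((j + 1 : ℕ) : ℤ))
      push_cast
      ring_nf

lemma lintegral_indicator_one_mul {ρ : Measure (ℤ → A)} {s : Set (ℤ → A)}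
    (hs : MeasurableSet s) (h : (ℤ → A) → ℝ≥0∞) :
    ∫⁻ ω, s.indicator 1 ω * h ω ∂ρ = ∫⁻ ω in s, h ω ∂ρ := by
  rw [← lintegral_indicator hs h]
  apply lintegral_congr
  intro ω
  by_cases hω : ω ∈ s <;> simp [Set.indicator_apply, hω]

lemma chain_rule (hker : IsProbKernel P) {ρ : Measure (ℤ → A)} [IsProbabilityMeasure ρ]
    (hsi : ShiftInvariant ρ) (hc : Compatible P ρ) :
    ∀ (w : List A) (g : Past A → ℝ≥0∞), Measurable g →
      ∫⁻ ω, (cylPast w).indicator 1 (rpast ω) * g (rpast ω) ∂ρ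
        = ∫⁻ ω, prodP P w (pastN w.length ω) * g (paste w (pastN w.length ω)) ∂ρ := by
  intro w
  induction w with
  | nil =>
      intro g hg
      rw [List.length_nil, pastN_zero]
      apply lintegral_congr
      intro ω
      simp [cylPast, prodP, paste]
  | cons a w ih =>
      intro g hg
      set n := w.length with hn
      set G : Past A → ℝ≥0∞ := fun y => (cylPast w).indicator 1 y * g (consPast a y) with hG
      have hGmeas : Measurable G :=
        (measurable_one.indicator (measurableSet_cylPast w)).mul
          (hg.comp (measurable_consPast a))
      set g₁ : Past A → ℝ≥0∞ := fun y => pE P a y * g (consPast a y) with hg₁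
      have hg₁meas : Measurable g₁ :=
        (measurable_pE hker a).mul (hg.comp (measurable_consPast a))
      set K : Past A → ℝ≥0∞ := fun y => prodP P (a :: w) y * g (paste (a :: w) y) with hK
      have hKmeas : Measurable K :=
        (measurable_prodP hker _).mul (hg.comp (measurable_paste _))
      have step1 : ∫⁻ ω, (cylPast (a :: w)).indicator 1 (rpast ω) * g (rpast ω) ∂ρ
          = ∫⁻ ω, ({ω : ℤ → A | ω 0 = a}).indicator 1 ω * G (past ω) ∂ρ := by
        apply lintegral_congr
        intro ω
        have hmemc : rpast ω ∈ cylPast (a :: w) ↔ (ω 0 = a ∧ past ω ∈ cylPast w) := by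
          show (rpast ω 0 = a ∧ tailPast (rpast ω) ∈ cylPast w) ↔ _
          rw [rpast_zero, tailPast_rpast]
        have hmem0 : ω ∈ {ω : ℤ → A | ω 0 = a} ↔ ω 0 = a := Iff.rfl
        by_cases h0 : ω 0 = a
        · have hcons := consPast_past h0
          by_cases h1 : past ω ∈ cylPast w
          · rw [Set.indicator_of_mem (hmemc.mpr ⟨h0, h1⟩), Set.indicator_of_mem (hmem0.mpr h0)]
            show 1 * g (rpast ω) = 1 * G (past ω)
            rw [hG]
            show 1 * g (rpast ω) = 1 * ((cylPast w).indicator 1 (past ω) * g (consPast a (past ω)))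
            rw [Set.indicator_of_mem h1, hcons]
            simp
          · rw [Set.indicator_of_notMem (fun hh => h1 (hmemc.mp hh).2)]
            show (0 : ℝ≥0∞) * g (rpast ω) = _
            have : G (past ω) = 0 := by
              rw [hG]
              show (cylPast w).indicator 1 (past ω) * g (consPast a (past ω)) = 0
              rw [Set.indicator_of_notMem h1]
              simp
            rw [this]
            simp
        · rw [Set.indicator_of_notMem (fun hh => h0 (hmemc.mp hh).1),
            Set.indicator_of_notMem (fun hh => h0 (hmem0.mp hh))]
          simp
      have step2 : ∫⁻ ω, ({ω : ℤ → A | ω 0 = a}).indicator 1 ω * G (past ω) ∂ρ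
          = ∫⁻ ω in {ω : ℤ → A | ω 0 = a}, G (past ω) ∂ρ :=
        lintegral_indicator_one_mul (measurableSet_eq_zero a) _
      have step3 : ∫⁻ ω in {ω : ℤ → A | ω 0 = a}, G (past ω) ∂ρ
          = ∫⁻ ω, pE P a (past ω) * G (past ω) ∂ρ := upgrade hker hc a hGmeas
      have step4 : ∫⁻ ω, pE P a (past ω) * G (past ω) ∂ρ
          = ∫⁻ ω, pE P a (rpast ω) * G (rpast ω) ∂ρ :=
        lintegral_comp_congr measurable_past measurable_rpast (map_rpast_eq_map_past hsi)
          ((measurable_pE hker a).mul hGmeas)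
      have step5 : ∫⁻ ω, pE P a (rpast ω) * G (rpast ω) ∂ρ
          = ∫⁻ ω, (cylPast w).indicator 1 (rpast ω) * g₁ (rpast ω) ∂ρ := by
        apply lintegral_congr
        intro ω
        rw [hG, hg₁]
        ring
      have step6 : ∫⁻ ω, (cylPast w).indicator 1 (rpast ω) * g₁ (rpast ω) ∂ρ
          = ∫⁻ ω, prodP P w (pastN n ω) * g₁ (paste w (pastN n ω)) ∂ρ := ih g₁ hg₁meas
      have step7 : ∫⁻ ω, prodP P w (pastN n ω) * g₁ (paste w (pastN n ω)) ∂ρ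
          = ∫⁻ ω, K (pastN n ω) ∂ρ := by
        apply lintegral_congr
        intro ω
        rw [hK, hg₁]
        show prodP P w (pastN n ω) * (pE P a (paste w (pastN n ω)) * g (consPast a (paste w (pastN n ω))))
          = prodP P (a :: w) (pastN n ω) * g (paste (a :: w) (pastN n ω))
        rw [show prodP P (a :: w) (pastN n ω) = pE P a (paste w (pastN n ω)) * prodP P w (pastN n ω) from rfl,
          show paste (a :: w) (pastN n ω) = consPast a (paste w (pastN n ω)) from rfl]
        ring
      have step8 : ∫⁻ ω, K (pastN n ω) ∂ρ = ∫⁻ ω, K (pastN (n + 1) ω) ∂ρ :=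
        lintegral_comp_congr (measurable_pastN n) (measurable_pastN (n + 1))
          (by rw [map_pastN_eq_map_rpast hsi, map_pastN_eq_map_rpast hsi]) hKmeas
      rw [step1, step2, step3, step4, step5, step6, step7, step8]
      rfl

end ChainRule

-- ### Part 3 : comparison of cylinder probabilities

noncomputable def Creal (P : A → Past A → ℝ) (δ : ℝ) (n : ℕ) : ℝ :=
  ∏ j ∈ Finset.range n, (1 + varRate P j / δ)

section Var

variable [Nonempty A] {P : A → Past A → ℝ}

lemma varRate_bddAbove (hker : IsProbKernel P) (k : ℕ) :
    ∀ d ∈ {d | ∃ (b : A) (x y : Past A), (∀ i < k, x i = y i) ∧ d = |P b x - P b y|}, d ≤ 1 := by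
  rintro d ⟨b, x, y, _, rfl⟩
  rw [abs_le]
  constructor
  · have h1 := hker.2.1 b x
    have h2 := P_le_one hker b y
    linarith
  · have h1 := hker.2.1 b y
    have h2 := P_le_one hker b x
    linarith

lemma varRate_nonneg (hker : IsProbKernel P) (k : ℕ) : 0 ≤ varRate P k := by
  have hmem : (0:ℝ) ∈ {d | ∃ (b : A) (x y : Past A), (∀ i < k, x i = y i) ∧ d = |P b x - P b y|} := by
    refine ⟨Classical.arbitrary A, (fun _ => Classical.arbitrary A), (fun _ => Classical.arbitrary A),
      fun _ _ => rfl, by simp⟩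
  exact le_csSup ⟨1, varRate_bddAbove hker k⟩ hmem

lemma abs_le_varRate (hker : IsProbKernel P) {k : ℕ} {b : A} {x y : Past A}
    (h : ∀ i < k, x i = y i) : |P b x - P b y| ≤ varRate P k :=
  le_csSup ⟨1, varRate_bddAbove hker k⟩ ⟨b, x, y, h, rfl⟩

lemma paste_agree (w : List A) (x y : Past A) : ∀ i < w.length, paste w x i = paste w y i := by
  induction w with
  | nil => intro i hi; exact absurd hi (Nat.not_lt_zero i)
  | cons a w ih =>
      intro i hi
      match i with
      | 0 => rfl
      | j + 1 =>
          show paste w x j = paste w y j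
          exact ih j (Nat.lt_of_succ_lt_succ hi)

lemma one_le_creal_factor (hker : IsProbKernel P) {δ : ℝ} (hδ : 0 < δ) (j : ℕ) :
    (1:ℝ) ≤ 1 + varRate P j / δ := by
  have := varRate_nonneg hker j
  have : 0 ≤ varRate P j / δ := div_nonneg this hδ.le
  linarith

lemma creal_nonneg (hker : IsProbKernel P) {δ : ℝ} (hδ : 0 < δ) (n : ℕ) :
    (0:ℝ) ≤ Creal P δ n :=
  Finset.prod_nonneg fun j _ => le_trans zero_le_one (one_le_creal_factor hker hδ j)

lemma prodP_ratio (hker : IsProbKernel P) {δ : ℝ} (hδ : 0 < δ) (hδP : ∀ a x, δ ≤ P a x)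
    (w : List A) (x y : Past A) :
    prodP P w x ≤ ENNReal.ofReal (Creal P δ w.length) * prodP P w y := by
  induction w with
  | nil =>
      show (1:ℝ≥0∞) ≤ ENNReal.ofReal (Creal P δ 0) * 1
      simp [Creal]
  | cons a w ih =>
      set v := varRate P w.length with hv
      have hvnn : 0 ≤ v := varRate_nonneg hker _
      have hreal : P a (paste w x) ≤ (1 + v / δ) * P a (paste w y) := by
        have hd : |P a (paste w x) - P a (paste w y)| ≤ v :=
          abs_le_varRate hker (paste_agree w x y)
        have h1 : P a (paste w x) ≤ P a (paste w y) + v := by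
          have := (abs_le.mp hd).2
          linarith
        have h2 : v = (v / δ) * δ := by field_simp
        have h3 : (v / δ) * δ ≤ (v / δ) * P a (paste w y) :=
          mul_le_mul_of_nonneg_left (hδP a _) (div_nonneg hvnn hδ.le)
        nlinarith
      have hEreal : pE P a (paste w x)
          ≤ ENNReal.ofReal (1 + v / δ) * pE P a (paste w y) := by
        rw [pE, pE, ← ENNReal.ofReal_mul (by positivity)]
        exact ENNReal.ofReal_le_ofReal hreal
      calc prodP P (a :: w) x = pE P a (paste w x) * prodP P w x := rfl
      _ ≤ (ENNReal.ofReal (1 + v / δ) * pE P a (paste w y))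
            * (ENNReal.ofReal (Creal P δ w.length) * prodP P w y) := mul_le_mul' hEreal ih
      _ = (ENNReal.ofReal (1 + v / δ) * ENNReal.ofReal (Creal P δ w.length))
            * (pE P a (paste w y) * prodP P w y) := by ring
      _ = ENNReal.ofReal (Creal P δ (w.length + 1)) * prodP P (a :: w) y := by
        rw [← ENNReal.ofReal_mul (by positivity)]
        have h4 : (1 + v / δ) * Creal P δ w.length = Creal P δ (w.length + 1) := by
          rw [Creal, Creal, Finset.prod_range_succ]
          ring
        rw [h4]
        rfl

end Var

section Compare

variable [MeasurableSingletonClass A] [Nonempty A] {P : A → Past A → ℝ}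

lemma cyl_measure (hker : IsProbKernel P) {ρ : Measure (ℤ → A)} [IsProbabilityMeasure ρ]
    (hsi : ShiftInvariant ρ) (hc : Compatible P ρ) (w : List A) :
    ρ (rpast ⁻¹' cylPast w) = ∫⁻ ω, prodP P w (pastN w.length ω) ∂ρ := by
  have h := chain_rule hker hsi hc w (fun _ => 1) measurable_const
  simp only [mul_one] at h
  rw [← h]
  have : ∀ ω : ℤ → A, (cylPast w).indicator (1 : Past A → ℝ≥0∞) (rpast ω)
      = (rpast ⁻¹' cylPast w).indicator (fun _ => (1:ℝ≥0∞)) ω := by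
    intro ω
    by_cases hω : rpast ω ∈ cylPast w
    · rw [Set.indicator_of_mem hω]
      rw [Set.indicator_of_mem (show ω ∈ rpast ⁻¹' cylPast w from hω)]
      rfl
    · rw [Set.indicator_of_notMem hω]
      exact Set.indicator_of_notMem (show ω ∉ rpast ⁻¹' cylPast w from hω) _ |>.symm
  rw [lintegral_congr this, lintegral_indicator (measurable_rpast (measurableSet_cylPast w))]
  simp

lemma cyl_compare (hker : IsProbKernel P) {δ : ℝ} (hδ : 0 < δ) (hδP : ∀ a x, δ ≤ P a x)
    {μ ν : Measure (ℤ → A)} [IsProbabilityMeasure μ] [IsProbabilityMeasure ν]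
    (hsiμ : ShiftInvariant μ) (hcμ : Compatible P μ)
    (hsiν : ShiftInvariant ν) (hcν : Compatible P ν) (w : List A) :
    ν (rpast ⁻¹' cylPast w) ≤ ENNReal.ofReal (Creal P δ w.length) * μ (rpast ⁻¹' cylPast w) := by
  set n := w.length
  set C : ℝ≥0∞ := ENNReal.ofReal (Creal P δ n) with hC
  have hfix : ∀ y : Past A, ν (rpast ⁻¹' cylPast w) ≤ C * prodP P w y := by
    intro y
    rw [cyl_measure hker hsiν hcν w]
    calc ∫⁻ ω, prodP P w (pastN n ω) ∂ν ≤ ∫⁻ _ω, C * prodP P w y ∂ν :=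
      lintegral_mono fun ω => prodP_ratio hker hδ hδP w (pastN n ω) y
    _ = C * prodP P w y := by rw [lintegral_const, measure_univ, mul_one]
  calc ν (rpast ⁻¹' cylPast w) = ∫⁻ _ω, ν (rpast ⁻¹' cylPast w) ∂μ := by
        rw [lintegral_const, measure_univ, mul_one]
  _ ≤ ∫⁻ ω, C * prodP P w (pastN n ω) ∂μ := lintegral_mono fun ω => hfix (pastN n ω)
  _ = C * ∫⁻ ω, prodP P w (pastN n ω) ∂μ :=
      lintegral_const_mul C ((measurable_prodP hker w).comp (measurable_pastN n))
  _ = C * μ (rpast ⁻¹' cylPast w) := by rw [cyl_measure hker hsiμ hcμ w]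

end Compare

-- ### Part 4 : Cesàro smallness

lemma creal_le_exp [Nonempty A] {P : A → Past A → ℝ} (hker : IsProbKernel P)
    {δ : ℝ} (hδ : 0 < δ) (n : ℕ) :
    Creal P δ n ≤ Real.exp ((∑ j ∈ Finset.range n, varRate P j) / δ) := by
  rw [Creal]
  calc ∏ j ∈ Finset.range n, (1 + varRate P j / δ)
      ≤ ∏ j ∈ Finset.range n, Real.exp (varRate P j / δ) := by
        apply Finset.prod_le_prod
        · intro j _; exact le_trans zero_le_one (one_le_creal_factor hker hδ j)
        · intro j _
          have := Real.add_one_le_exp (varRate P j / δ)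
          linarith
  _ = Real.exp (∑ j ∈ Finset.range n, varRate P j / δ) := (Real.exp_sum _ _).symm
  _ = Real.exp ((∑ j ∈ Finset.range n, varRate P j) / δ) := by rw [← Finset.sum_div]

lemma exists_good_m [Nonempty A] {P : A → Past A → ℝ} (hker : IsProbKernel P)
    {δ : ℝ} (hδ : 0 < δ)
    (hcont : Tendsto (varRate P) atTop (nhds 0)) {k : ℕ} (hk : 1 ≤ k)
    {γ C ε : ℝ} (hγ : 0 < γ) (hC : 0 ≤ C) (hε : 0 < ε) :
    ∃ m : ℕ, 1 ≤ m ∧ Creal P δ (m * k) * (C * Real.exp (-(γ * m))) < ε := by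
  have hkR : (0:ℝ) < (k:ℝ) := by exact_mod_cast hk
  set η := δ * γ / (2 * k) with hη
  have hηpos : 0 < η := by positivity
  have hces : Tendsto (fun n : ℕ => ((n:ℝ))⁻¹ * ∑ j ∈ Finset.range n, varRate P j)
      atTop (nhds 0) := hcont.cesaro
  have hev : ∀ᶠ n : ℕ in atTop, ((n:ℝ))⁻¹ * ∑ j ∈ Finset.range n, varRate P j < η :=
    hces.eventually_lt_const hηpos
  obtain ⟨N₀, hN₀⟩ := eventually_atTop.mp hev
  -- geometric decay
  set r := Real.exp (-(γ / 2)) with hr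
  have hr0 : 0 ≤ r := Real.exp_nonneg _
  have hr1 : r < 1 := Real.exp_lt_one_iff.mpr (by linarith)
  have hgeo : Tendsto (fun m : ℕ => C * r ^ m) atTop (nhds 0) := by
    have := tendsto_pow_atTop_nhds_zero_of_lt_one hr0 hr1
    simpa using this.const_mul C
  have hev2 : ∀ᶠ m : ℕ in atTop, C * r ^ m < ε := hgeo.eventually_lt_const hε
  obtain ⟨N₁, hN₁⟩ := eventually_atTop.mp hev2
  refine ⟨max (max N₀ N₁) 1, le_max_right _ _, ?_⟩
  set m := max (max N₀ N₁) 1 with hm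
  have hm1 : 1 ≤ m := le_max_right _ _
  have hmN₀ : N₀ ≤ m := le_trans (le_max_left _ _) (le_max_left _ _)
  have hmN₁ : N₁ ≤ m := le_trans (le_max_right _ _) (le_max_left _ _)
  have hmk : N₀ ≤ m * k := le_trans hmN₀ (Nat.le_mul_of_pos_right m (by omega))
  have hmkpos : 0 < m * k := by positivity
  -- sum bound
  have havg := hN₀ (m * k) hmk
  have hsum : ∑ j ∈ Finset.range (m * k), varRate P j ≤ η * (m * k) := by
    have hmkR : (0:ℝ) < ((m * k : ℕ):ℝ) := by exact_mod_cast hmkpos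
    have := mul_le_mul_of_nonneg_left havg.le hmkR.le
    rw [← mul_assoc, mul_inv_cancel₀ (ne_of_gt hmkR), one_mul] at this
    calc ∑ j ∈ Finset.range (m * k), varRate P j
        ≤ ((m * k : ℕ):ℝ) * η := this
    _ = η * (m * k) := by push_cast; ring
  have hexp : (∑ j ∈ Finset.range (m * k), varRate P j) / δ ≤ γ * m / 2 := by
    rw [div_le_iff₀ hδ] at *
    calc ∑ j ∈ Finset.range (m * k), varRate P j ≤ η * (m * k) := hsum
    _ = γ * m / 2 * δ := by rw [hη]; push_cast; field_simp
  have hcr : Creal P δ (m * k) ≤ Real.exp (γ * m / 2) :=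
    le_trans (creal_le_exp hker hδ _) (Real.exp_le_exp.mpr hexp)
  have hfinal : Creal P δ (m * k) * (C * Real.exp (-(γ * m))) ≤ C * r ^ m := by
    have h1 : Creal P δ (m * k) * (C * Real.exp (-(γ * m)))
        ≤ Real.exp (γ * m / 2) * (C * Real.exp (-(γ * m))) :=
      mul_le_mul_of_nonneg_right hcr (by positivity)
    calc Creal P δ (m * k) * (C * Real.exp (-(γ * m)))
        ≤ Real.exp (γ * m / 2) * (C * Real.exp (-(γ * m))) := h1
    _ = C * (Real.exp (γ * m / 2) * Real.exp (-(γ * m))) := by ring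
    _ = C * Real.exp (γ * m / 2 + -(γ * m)) := by rw [Real.exp_add]
    _ = C * Real.exp ((m : ℝ) * (-(γ / 2))) := by congr 1; ring_nf
    _ = C * r ^ m := by rw [Real.exp_nat_mul, hr]
  exact lt_of_le_of_lt hfinal (hN₁ m hmN₁)

-- ### pinned defs needed (copies for scratch)
-- ### Part 5 : block functions

def bidx {m k : ℕ} (b : Fin m) (i : Fin k) : Fin (m * k) :=
  ⟨(i : ℕ) + (b : ℕ) * k, by
    have hi : (i : ℕ) < k := i.isLt
    have hb : (b : ℕ) + 1 ≤ m := b.isLt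
    calc (i : ℕ) + (b : ℕ) * k < k + (b : ℕ) * k := by omega
    _ = ((b : ℕ) + 1) * k := by ring
    _ ≤ m * k := Nat.mul_le_mul_right k hb⟩

noncomputable def blockInd {m k : ℕ} (wst : Fin k → A) (b : Fin m) (u : Fin (m * k) → A) : ℝ :=
  Set.indicator {u : Fin (m * k) → A | ∀ i : Fin k, u (bidx b i) = wst i} (fun _ => (1:ℝ)) u

noncomputable def blockFun {m k : ℕ} (wst : Fin k → A) (u : Fin (m * k) → A) : ℝ :=
  (m : ℝ)⁻¹ * ∑ b : Fin m, blockInd wst b u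

lemma blockInd_nonneg {m k : ℕ} (wst : Fin k → A) (b : Fin m) (u : Fin (m * k) → A) :
    0 ≤ blockInd wst b u := by
  rw [blockInd]
  by_cases h : u ∈ {u : Fin (m * k) → A | ∀ i : Fin k, u (bidx b i) = wst i}
  · rw [Set.indicator_of_mem h]; norm_num
  · rw [Set.indicator_of_notMem h]

lemma blockInd_le_one {m k : ℕ} (wst : Fin k → A) (b : Fin m) (u : Fin (m * k) → A) :
    blockInd wst b u ≤ 1 := by
  rw [blockInd]
  by_cases h : u ∈ {u : Fin (m * k) → A | ∀ i : Fin k, u (bidx b i) = wst i}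
  · rw [Set.indicator_of_mem h]
  · rw [Set.indicator_of_notMem h]; norm_num

lemma blockFun_nonneg {m k : ℕ} (wst : Fin k → A) (u : Fin (m * k) → A) :
    0 ≤ blockFun wst u :=
  mul_nonneg (by positivity) (Finset.sum_nonneg fun b _ => blockInd_nonneg wst b u)

lemma blockFun_le_one {m k : ℕ} (hm : 1 ≤ m) (wst : Fin k → A) (u : Fin (m * k) → A) :
    blockFun wst u ≤ 1 := by
  have hmR : (0:ℝ) < m := by exact_mod_cast hm
  rw [blockFun]
  have hsum : ∑ b : Fin m, blockInd wst b u ≤ (m:ℝ) := by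
    calc ∑ b : Fin m, blockInd wst b u ≤ ∑ _b : Fin m, (1:ℝ) :=
      Finset.sum_le_sum fun b _ => blockInd_le_one wst b u
    _ = (m:ℝ) := by simp
  calc (m : ℝ)⁻¹ * ∑ b : Fin m, blockInd wst b u ≤ (m : ℝ)⁻¹ * (m:ℝ) :=
    mul_le_mul_of_nonneg_left hsum (by positivity)
  _ = 1 := inv_mul_cancel₀ (ne_of_gt hmR)

/-- decomposition of an index `j : Fin (m*k)` into block number and offset. -/
def jblock {m k : ℕ} (hk : 1 ≤ k) (j : Fin (m * k)) : Fin m :=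
  ⟨(j : ℕ) / k, Nat.div_lt_of_lt_mul (Nat.lt_of_lt_of_le j.isLt (le_of_eq (Nat.mul_comm m k)))⟩

def joff {m k : ℕ} (hk : 1 ≤ k) (j : Fin (m * k)) : Fin k :=
  ⟨(j : ℕ) % k, Nat.mod_lt _ (by omega)⟩

lemma bidx_jblock_joff {m k : ℕ} (hk : 1 ≤ k) (j : Fin (m * k)) :
    bidx (jblock hk j) (joff hk j) = j := by
  apply Fin.ext
  show (j : ℕ) % k + (j : ℕ) / k * k = (j : ℕ)
  exact Nat.mod_add_div' _ _

lemma bidx_eq_iff {m k : ℕ} (hk : 1 ≤ k) (b b' : Fin m) (i i' : Fin k) :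
    bidx b i = bidx b' i' ↔ b = b' ∧ i = i' := by
  constructor
  · intro h
    have hv : (i : ℕ) + (b : ℕ) * k = (i' : ℕ) + (b' : ℕ) * k := congrArg Fin.val h
    have hb : (b : ℕ) = (b' : ℕ) := by
      have h1 : ((i : ℕ) + (b : ℕ) * k) / k = (b : ℕ) := by
        rw [Nat.add_mul_div_right _ _ (by omega : 0 < k), Nat.div_eq_of_lt i.isLt, Nat.zero_add]
      have h2 : ((i' : ℕ) + (b' : ℕ) * k) / k = (b' : ℕ) := by
        rw [Nat.add_mul_div_right _ _ (by omega : 0 < k), Nat.div_eq_of_lt i'.isLt, Nat.zero_add]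
      rw [← h1, ← h2, hv]
    constructor
    · exact Fin.ext hb
    · apply Fin.ext
      have : (i : ℕ) = (i' : ℕ) := by
        have := hv
        rw [hb] at this
        omega
      exact this
  · rintro ⟨rfl, rfl⟩; rfl

section Delta

variable [Nontrivial A]

lemma blockInd_eq_of_ne {m k : ℕ} (hk : 1 ≤ k) (wst : Fin k → A) {j : Fin (m * k)}
    {u v : Fin (m * k) → A} (huv : ∀ i, i ≠ j → u i = v i) {b : Fin m}
    (hb : b ≠ jblock hk j) : blockInd wst b u = blockInd wst b v := by
  have hco : ∀ i : Fin k, u (bidx b i) = v (bidx b i) := by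
    intro i
    apply huv
    intro hc
    apply hb
    have : bidx b i = bidx (jblock hk j) (joff hk j) := by rw [hc, bidx_jblock_joff]
    exact ((bidx_eq_iff hk _ _ _ _).mp this).1
  have : u ∈ {u : Fin (m * k) → A | ∀ i : Fin k, u (bidx b i) = wst i}
      ↔ v ∈ {u : Fin (m * k) → A | ∀ i : Fin k, u (bidx b i) = wst i} := by
    constructor
    · intro h i; rw [← hco i]; exact h i
    · intro h i; rw [hco i]; exact h i
  rw [blockInd, blockInd]
  by_cases h : u ∈ {u : Fin (m * k) → A | ∀ i : Fin k, u (bidx b i) = wst i}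
  · rw [Set.indicator_of_mem h, Set.indicator_of_mem (this.mp h)]
  · rw [Set.indicator_of_notMem h, Set.indicator_of_notMem (fun hh => h (this.mpr hh))]

lemma abs_blockInd_sub_le {m k : ℕ} (wst : Fin k → A) (b : Fin m) (u v : Fin (m * k) → A) :
    |blockInd wst b u - blockInd wst b v| ≤ 1 := by
  rw [abs_le]
  have h1 := blockInd_nonneg wst b u
  have h2 := blockInd_nonneg wst b v
  have h3 := blockInd_le_one wst b u
  have h4 := blockInd_le_one wst b v
  constructor <;> linarith

lemma blockFun_sub {m k : ℕ} (hk : 1 ≤ k) (wst : Fin k → A) {j : Fin (m * k)}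
    {u v : Fin (m * k) → A} (huv : ∀ i, i ≠ j → u i = v i) :
    blockFun wst u - blockFun wst v
      = (m : ℝ)⁻¹ * (blockInd wst (jblock hk j) u - blockInd wst (jblock hk j) v) := by
  rw [blockFun, blockFun, ← mul_sub, ← Finset.sum_sub_distrib]
  congr 1
  rw [Finset.sum_eq_single (jblock hk j)]
  · intro b _ hb
    rw [blockInd_eq_of_ne hk wst huv hb]
    ring
  · intro h; exact absurd (Finset.mem_univ _) h

lemma deltaj_blockFun {m k : ℕ} (hm : 1 ≤ m) (hk : 1 ≤ k) (wst : Fin k → A) (j : Fin (m * k)) :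
    deltaj (blockFun (m := m) wst) j = (m : ℝ)⁻¹ := by
  have hmR : (0:ℝ) < m := by exact_mod_cast hm
  have hupper : ∀ d ∈ {d | ∃ a b : Fin (m * k) → A, (∀ i, i ≠ j → a i = b i)
      ∧ d = |blockFun wst a - blockFun wst b|}, d ≤ (m : ℝ)⁻¹ := by
    rintro d ⟨u, v, huv, rfl⟩
    rw [blockFun_sub hk wst huv, abs_mul, abs_of_nonneg (by positivity : (0:ℝ) ≤ (m:ℝ)⁻¹)]
    calc (m:ℝ)⁻¹ * |blockInd wst (jblock hk j) u - blockInd wst (jblock hk j) v|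
        ≤ (m:ℝ)⁻¹ * 1 := mul_le_mul_of_nonneg_left (abs_blockInd_sub_le wst _ u v) (by positivity)
    _ = (m:ℝ)⁻¹ := mul_one _
  -- the witness pair
  set u₀ : Fin (m * k) → A := fun j' => wst (joff hk j') with hu₀
  obtain ⟨c, hc⟩ := exists_ne (wst (joff hk j))
  set v : Fin (m * k) → A := Function.update u₀ j c with hv
  have huv : ∀ i, i ≠ j → u₀ i = v i := by
    intro i hi
    rw [hv, Function.update_of_ne hi]
  have hindu : ∀ b, blockInd wst b u₀ = 1 := by
    intro b
    rw [blockInd, Set.indicator_of_mem]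
    intro i
    show wst (joff hk (bidx b i)) = wst i
    congr 1
    apply Fin.ext
    show ((i : ℕ) + (b : ℕ) * k) % k = (i : ℕ)
    rw [Nat.add_mul_mod_self_right, Nat.mod_eq_of_lt i.isLt]
  have hindv0 : blockInd wst (jblock hk j) v = 0 := by
    rw [blockInd, Set.indicator_of_notMem]
    intro h
    have := h (joff hk j)
    rw [bidx_jblock_joff, hv, Function.update_self] at this
    exact hc this
  have hdiff : blockFun wst u₀ - blockFun wst v = (m : ℝ)⁻¹ := by
    rw [blockFun_sub hk wst huv, hindu, hindv0]
    ring
  have hmem : (m:ℝ)⁻¹ ∈ {d | ∃ a b : Fin (m * k) → A, (∀ i, i ≠ j → a i = b i)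
      ∧ d = |blockFun wst a - blockFun wst b|} := by
    refine ⟨u₀, v, huv, ?_⟩
    rw [hdiff, abs_of_nonneg (by positivity)]
  rw [deltaj]
  exact le_antisymm (csSup_le ⟨_, hmem⟩ hupper) (le_csSup ⟨_, hupper⟩ hmem)

lemma delta1_blockFun {m k : ℕ} (hm : 1 ≤ m) (hk : 1 ≤ k) (wst : Fin k → A) :
    delta1 (blockFun (m := m) wst) = (k : ℝ) := by
  have hmR : (0:ℝ) < m := by exact_mod_cast hm
  rw [delta1]
  have : ∀ j : Fin (m * k), deltaj (blockFun (m := m) wst) j = (m : ℝ)⁻¹ :=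
    deltaj_blockFun hm hk wst
  rw [Finset.sum_congr rfl (fun j _ => this j), Finset.sum_const, Finset.card_univ,
    Fintype.card_fin, nsmul_eq_mul]
  push_cast
  field_simp

lemma delta2sq_blockFun {m k : ℕ} (hm : 1 ≤ m) (hk : 1 ≤ k) (wst : Fin k → A) :
    delta2sq (blockFun (m := m) wst) = (k : ℝ) / (m : ℝ) := by
  have hmR : (0:ℝ) < m := by exact_mod_cast hm
  rw [delta2sq]
  have : ∀ j : Fin (m * k), deltaj (blockFun (m := m) wst) j = (m : ℝ)⁻¹ :=
    deltaj_blockFun hm hk wst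
  rw [Finset.sum_congr rfl (fun j _ => by rw [this j]), Finset.sum_const, Finset.card_univ,
    Fintype.card_fin, nsmul_eq_mul]
  push_cast
  field_simp

end Delta

-- ### Part 6 : expectations and word events

section WordEvents

variable [MeasurableSingletonClass A]

def wcyl (k : ℕ) (wst : Fin k → A) : Set (ℤ → A) :=
  {ω | ∀ i : Fin k, ω (((i : ℕ) : ℤ) + 1) = wst i}

lemma measurableSet_coord_eq (t : ℤ) (a : A) : MeasurableSet {ω : ℤ → A | ω t = a} := by
  have he : {ω : ℤ → A | ω t = a} = (fun ω : ℤ → A => ω t) ⁻¹' {a} := by ext ω; simp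
  rw [he]; exact (measurable_pi_apply t) (measurableSet_singleton a)

lemma measurableSet_wcyl (k : ℕ) (wst : Fin k → A) : MeasurableSet (wcyl k wst) := by
  have he : wcyl k wst = ⋂ i : Fin k, {ω : ℤ → A | ω (((i : ℕ) : ℤ) + 1) = wst i} := by
    ext ω; simp [wcyl]
  rw [he]
  exact MeasurableSet.iInter fun i => measurableSet_coord_eq _ _

def bev {m k : ℕ} (wst : Fin k → A) (b : Fin m) : Set (ℤ → A) :=
  {ω | ∀ i : Fin k, ω ((((bidx b i : Fin (m * k)) : ℕ) : ℤ) + 1) = wst i}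

lemma bev_eq_zshift {m k : ℕ} (wst : Fin k → A) (b : Fin m) :
    bev wst b = zshift ((b : ℕ) * k) ⁻¹' wcyl k wst := by
  ext ω
  simp only [bev, wcyl, Set.mem_preimage, Set.mem_setOf_eq, zshift]
  apply forall_congr'
  intro i
  have harg : ((i : ℕ) : ℤ) + 1 + ((b : ℕ) : ℤ) * ((k : ℕ) : ℤ)
      = (((bidx b i : Fin (m * k)) : ℕ) : ℤ) + 1 := by
    show _ = (((i : ℕ) + (b : ℕ) * k : ℕ) : ℤ) + 1
    push_cast
    ring
  rw [harg]

lemma measurableSet_bev {m k : ℕ} (wst : Fin k → A) (b : Fin m) :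
    MeasurableSet (bev wst b) := by
  rw [bev_eq_zshift]
  exact measurable_zshift _ (measurableSet_wcyl k wst)

lemma measure_bev {m k : ℕ} {ρ : Measure (ℤ → A)} (hsi : ShiftInvariant ρ)
    (wst : Fin k → A) (b : Fin m) : ρ (bev wst b) = ρ (wcyl k wst) := by
  rw [bev_eq_zshift]
  exact zshift_invariance hsi _ (measurableSet_wcyl k wst)

lemma blockInd_word {m k : ℕ} (wst : Fin k → A) (b : Fin m) (ω : ℤ → A) :
    blockInd wst b (word (m * k) ω) = Set.indicator (bev wst b) (fun _ => (1:ℝ)) ω := by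
  have hmem : word (m * k) ω ∈ {u : Fin (m * k) → A | ∀ i : Fin k, u (bidx b i) = wst i}
      ↔ ω ∈ bev wst b := Iff.rfl
  rw [blockInd]
  by_cases h : ω ∈ bev wst b
  · rw [Set.indicator_of_mem (hmem.mpr h), Set.indicator_of_mem h]
  · rw [Set.indicator_of_notMem (fun hh => h (hmem.mp hh)), Set.indicator_of_notMem h]

lemma integrable_blockInd_word {m k : ℕ} {ρ : Measure (ℤ → A)} [IsFiniteMeasure ρ]
    (wst : Fin k → A) (b : Fin m) :
    Integrable (fun ω => blockInd wst b (word (m * k) ω)) ρ := by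
  have he : (fun ω => blockInd wst b (word (m * k) ω))
      = Set.indicator (bev wst b) (fun _ => (1:ℝ)) := by
    funext ω; exact blockInd_word wst b ω
  rw [he]
  exact (integrable_const (1:ℝ)).indicator (measurableSet_bev wst b)

lemma integral_blockFun_word {m k : ℕ} (hm : 1 ≤ m) {ρ : Measure (ℤ → A)}
    [IsProbabilityMeasure ρ] (hsi : ShiftInvariant ρ) (wst : Fin k → A) :
    ∫ ω, blockFun wst (word (m * k) ω) ∂ρ = (ρ (wcyl k wst)).toReal := by
  have hmR : (0:ℝ) < m := by exact_mod_cast hm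
  have h1 : ∫ ω, blockFun wst (word (m * k) ω) ∂ρ
      = (m : ℝ)⁻¹ * ∫ ω, ∑ b : Fin m, blockInd wst b (word (m * k) ω) ∂ρ := by
    rw [← integral_const_mul]
    rfl
  rw [h1, integral_finset_sum _ (fun b _ => integrable_blockInd_word wst b)]
  have h2 : ∀ b : Fin m, ∫ ω, blockInd wst b (word (m * k) ω) ∂ρ = (ρ (wcyl k wst)).toReal := by
    intro b
    have he : (fun ω => blockInd wst b (word (m * k) ω))
        = Set.indicator (bev wst b) (fun _ => (1:ℝ)) := by
      funext ω; exact blockInd_word wst b ω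
    rw [he]
    have : ∫ ω, Set.indicator (bev wst b) (fun _ => (1:ℝ)) ω ∂ρ
        = ∫ ω, Set.indicator (bev wst b) (1 : (ℤ → A) → ℝ) ω ∂ρ := rfl
    rw [this, integral_indicator_one (measurableSet_bev wst b)]
    exact congrArg ENNReal.toReal (measure_bev hsi wst b)
  rw [Finset.sum_congr rfl (fun b _ => h2 b), Finset.sum_const, Finset.card_univ,
    Fintype.card_fin, nsmul_eq_mul]
  field_simp

-- word fibers
def wlist {n : ℕ} (u : Fin n → A) : List A := List.ofFn (fun i => u (Fin.rev i))

lemma length_wlist {n : ℕ} (u : Fin n → A) : (wlist u).length = n := by simp [wlist]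

lemma mem_cylPast {w : List A} {x : Past A} :
    x ∈ cylPast w ↔ ∀ (i : ℕ) (h : i < w.length), x i = w.get ⟨i, h⟩ := by
  induction w generalizing x with
  | nil => simp [cylPast]
  | cons a w ih =>
      constructor
      · rintro ⟨h0, htail⟩ i hi
        match i with
        | 0 => exact h0
        | i' + 1 =>
            have := (ih.mp htail) i' (by simpa using Nat.lt_of_succ_lt_succ hi)
            exact this
      · intro h
        refine ⟨h 0 (by simp), ih.mpr ?_⟩
        intro i hi
        exact h (i + 1) (by simpa using Nat.succ_lt_succ hi)

lemma word_fiber {n : ℕ} (u : Fin n → A) :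
    {ω : ℤ → A | word n ω = u} = zshift (n : ℤ) ⁻¹' (rpast ⁻¹' cylPast (wlist u)) := by
  ext ω
  simp only [Set.mem_preimage, Set.mem_setOf_eq]
  rw [mem_cylPast]
  constructor
  · intro hL i h
    have hin : i < n := by rw [length_wlist] at h; exact h
    have hget : (wlist u).get ⟨i, h⟩ = u (Fin.rev ⟨i, hin⟩) := by
      simp [wlist, List.get_ofFn]
    rw [hget]
    have hw := congrFun hL (Fin.rev ⟨i, hin⟩)
    simp only [word] at hw
    have harg : -(i : ℤ) + (n : ℤ) = (((Fin.rev ⟨i, hin⟩ : Fin n) : ℕ) : ℤ) + 1 := by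
      rw [Fin.val_rev]
      simp only [Fin.val_mk]
      omega
    show ω (-(i : ℤ) + (n : ℤ)) = _
    rw [harg]
    exact hw
  · intro hR
    funext j
    have hjn : ((Fin.rev j : Fin n) : ℕ) < n := (Fin.rev j).isLt
    have hj : ((Fin.rev j : Fin n) : ℕ) < (wlist u).length := by rw [length_wlist]; exact hjn
    have hw := hR _ hj
    have hget : (wlist u).get ⟨_, hj⟩ = u (Fin.rev (⟨((Fin.rev j : Fin n) : ℕ), hjn⟩ : Fin n)) := by
      simp [wlist, List.get_ofFn]
    have heta : (⟨((Fin.rev j : Fin n) : ℕ), hjn⟩ : Fin n) = Fin.rev j := rfl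
    rw [hget, heta, Fin.rev_rev] at hw
    have harg : -((((Fin.rev j : Fin n) : ℕ)) : ℤ) + (n : ℤ) = ((j : ℕ) : ℤ) + 1 := by
      rw [Fin.val_rev]
      have := j.isLt
      omega
    show ω (((j : ℕ) : ℤ) + 1) = u j
    rw [← harg]
    exact hw

lemma measurableSet_word_fiber {n : ℕ} (u : Fin n → A) :
    MeasurableSet {ω : ℤ → A | word n ω = u} := by
  rw [word_fiber]
  exact measurable_zshift _ (measurable_rpast (measurableSet_cylPast (wlist u)))

end WordEvents

section WordCompare

variable [MeasurableSingletonClass A] [Nonempty A] {P : A → Past A → ℝ}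

open Classical in
lemma word_preimage_eq_biUnion {n : ℕ} (S : Set (Fin n → A)) :
    word (A := A) n ⁻¹' S
      = ⋃ u ∈ Finset.univ.filter (fun u : Fin n → A => u ∈ S), {ω : ℤ → A | word n ω = u} := by
  classical
  ext ω
  simp only [Set.mem_preimage, Set.mem_iUnion, Finset.mem_filter, Finset.mem_univ, true_and,
    Set.mem_setOf_eq]
  constructor
  · intro h; exact ⟨word n ω, h, rfl⟩
  · rintro ⟨u, hu, rfl⟩; exact hu

lemma measurableSet_word_event {n : ℕ} (S : Set (Fin n → A)) :
    MeasurableSet (word (A := A) n ⁻¹' S) := by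
  classical
  rw [word_preimage_eq_biUnion]
  exact MeasurableSet.biUnion (Finset.countable_toSet _)
    (fun u _ => measurableSet_word_fiber u)

lemma word_event_compare (hker : IsProbKernel P) {δ : ℝ} (hδ : 0 < δ)
    (hδP : ∀ a x, δ ≤ P a x)
    {μ ν : Measure (ℤ → A)} [IsProbabilityMeasure μ] [IsProbabilityMeasure ν]
    (hsiμ : ShiftInvariant μ) (hcμ : Compatible P μ)
    (hsiν : ShiftInvariant ν) (hcν : Compatible P ν) (n : ℕ) (S : Set (Fin n → A)) :
    ν (word n ⁻¹' S) ≤ ENNReal.ofReal (Creal P δ n) * μ (word n ⁻¹' S) := by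
  classical
  have hfiber : ∀ u : Fin n → A, ν {ω | word n ω = u}
      ≤ ENNReal.ofReal (Creal P δ n) * μ {ω | word n ω = u} := by
    intro u
    rw [word_fiber u,
      zshift_invariance hsiν _ (measurable_rpast (measurableSet_cylPast _)),
      zshift_invariance hsiμ _ (measurable_rpast (measurableSet_cylPast _))]
    have h := cyl_compare hker hδ hδP hsiμ hcμ hsiν hcν (wlist u)
    rwa [length_wlist] at h
  set T := Finset.univ.filter (fun u : Fin n → A => u ∈ S) with hT
  have hdis : (↑T : Set (Fin n → A)).PairwiseDisjoint
      (fun u => {ω : ℤ → A | word n ω = u}) := by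
    intro u _ v _ huv
    rw [Function.onFun, Set.disjoint_left]
    intro ω h1 h2
    rw [Set.mem_setOf_eq] at h1 h2
    exact huv (h1 ▸ h2 ▸ rfl)
  have hμd : ∀ (ρ : Measure (ℤ → A)), ρ (word (A := A) n ⁻¹' S)
      = ∑ u ∈ T, ρ {ω : ℤ → A | word n ω = u} := by
    intro ρ
    rw [word_preimage_eq_biUnion]
    exact measure_biUnion_finset hdis (fun u _ => measurableSet_word_fiber u)
  rw [hμd ν, hμd μ, Finset.mul_sum]
  exact Finset.sum_le_sum fun u _ => hfiber u

lemma integrable_blockFun_word {m k : ℕ} {ρ : Measure (ℤ → A)} [IsFiniteMeasure ρ]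
    (wst : Fin k → A) :
    Integrable (fun ω => blockFun wst (word (m * k) ω)) ρ := by
  have he : (fun ω => blockFun wst (word (m * k) ω))
      = fun ω => (m : ℝ)⁻¹ * ∑ b : Fin m, blockInd wst b (word (m * k) ω) := rfl
  rw [he]
  exact (integrable_finset_sum _ (fun b _ => integrable_blockInd_word wst b)).const_mul _

end WordCompare

section Main

variable [MeasurableSingletonClass A] [Nontrivial A] {P : A → Past A → ℝ}

lemma toReal_prob_le_one {ρ : Measure (ℤ → A)} [IsProbabilityMeasure ρ] (s : Set (ℤ → A)) :
    (ρ s).toReal ≤ 1 := by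
  have h := prob_le_one (μ := ρ) (s := s)
  calc (ρ s).toReal ≤ (1 : ℝ≥0∞).toReal := ENNReal.toReal_mono one_ne_top h
  _ = 1 := by simp

lemma wcyl_eq (hker : IsProbKernel P) {δ : ℝ} (hδ : 0 < δ) (hδP : ∀ a x, δ ≤ P a x)
    (hcont : Tendsto (varRate P) atTop (nhds 0))
    {μ ν : Measure (ℤ → A)} [IsProbabilityMeasure μ] [IsProbabilityMeasure ν]
    (hsiμ : ShiftInvariant μ) (hcμ : Compatible P μ)
    (hsiν : ShiftInvariant ν) (hcν : Compatible P ν)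
    (hconc : ConcExpRate μ) {k : ℕ} (hk : 1 ≤ k) (wst : Fin k → A) :
    ν (wcyl k wst) = μ (wcyl k wst) := by
  haveI : Nonempty A := inferInstance
  set p := (μ (wcyl k wst)).toReal with hp
  set q := (ν (wcyl k wst)).toReal with hq
  suffices hqp : q = p by
    rw [hq, hp] at hqp
    exact (ENNReal.toReal_eq_toReal_iff' (measure_ne_top ν _) (measure_ne_top μ _)).mp hqp
  by_contra hne
  have hε : 0 < |q - p| / 2 := by
    have : q - p ≠ 0 := sub_ne_zero.mpr hne
    have := abs_pos.mpr this
    linarith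
  set ε := |q - p| / 2 with hεdef
  obtain ⟨C, g, hgpos, hbound⟩ := hconc
  have hkR : (0:ℝ) < (k:ℝ) := by exact_mod_cast hk
  set G := g ε (k:ℝ) with hGdef
  have hG : 0 < G := hgpos ε (k:ℝ) hε hkR
  set γ := G / (k:ℝ) with hγdef
  have hγ : 0 < γ := div_pos hG hkR
  set C' := max C 0 with hC'def
  have hC'0 : 0 ≤ C' := le_max_right _ _
  have hCC' : C ≤ C' := le_max_left _ _
  obtain ⟨m, hm, hsmall⟩ := exists_good_m hker hδ hcont hk hγ hC'0 hε
  have hmR : (0:ℝ) < (m:ℝ) := by exact_mod_cast hm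
  set n := m * k with hndef
  have hn : 1 ≤ n := Nat.one_le_iff_ne_zero.mpr (by positivity)
  set f := blockFun (m := m) (k := k) wst with hf
  have hcμf : ∫ ω', f (word n ω') ∂μ = p := integral_blockFun_word hm hsiμ wst
  have hcνf : ∫ ω', f (word n ω') ∂ν = q := integral_blockFun_word hm hsiν wst
  set Dev := {ω : ℤ → A | ε < |f (word n ω) - ∫ ω', f (word n ω') ∂μ|} with hDev
  have hDevS : Dev = word (A := A) n ⁻¹' {u : Fin n → A | ε < |f u - ∫ ω', f (word n ω') ∂μ|} := rfl
  have hmDev : MeasurableSet Dev := by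
    rw [hDevS]; exact measurableSet_word_event _
  -- concentration bound
  have h1 : (μ Dev).toReal ≤ C * Real.exp (-(g ε (delta1 f)) / delta2sq f) :=
    hbound n hn f ε hε
  have h2 : -(g ε (delta1 f)) / delta2sq f = -(γ * m) := by
    rw [hf, delta1_blockFun hm hk, delta2sq_blockFun hm hk, ← hGdef, hγdef]
    field_simp
  rw [h2] at h1
  -- lower bound for ν Dev
  have hp0 : 0 ≤ p := ENNReal.toReal_nonneg
  have hp1 : p ≤ 1 := toReal_prob_le_one _
  have hpoint : ∀ ω : ℤ → A, |f (word n ω) - p|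
      ≤ ε + Set.indicator Dev (fun _ => (1:ℝ)) ω := by
    intro ω
    by_cases hω : ω ∈ Dev
    · rw [Set.indicator_of_mem hω]
      have h01 := blockFun_nonneg wst (word n ω)
      have h02 := blockFun_le_one hm wst (word n ω)
      rw [abs_le]
      constructor <;> [skip; skip] <;> [nlinarith; nlinarith]
    · rw [Set.indicator_of_notMem hω]
      have : ¬ (ε < |f (word n ω) - ∫ ω', f (word n ω') ∂μ|) := hω
      rw [hcμf] at this
      linarith [not_lt.mp this]
  have hint : Integrable (fun ω => f (word n ω)) ν := integrable_blockFun_word wst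
  have hintabs : Integrable (fun ω => |f (word n ω) - p|) ν := (hint.sub (integrable_const p)).abs
  have hintind : Integrable (fun ω => ε + Set.indicator Dev (fun _ => (1:ℝ)) ω) ν :=
    (integrable_const ε).add ((integrable_const (1:ℝ)).indicator hmDev)
  have hνDev : ε ≤ (ν Dev).toReal := by
    have key1 : |q - p| ≤ ∫ ω, |f (word n ω) - p| ∂ν := by
      have he : q - p = ∫ ω, (f (word n ω) - p) ∂ν := by
        rw [integral_sub hint (integrable_const p), hcνf, integral_const]
        simp
      rw [he]
      calc |∫ ω, (f (word n ω) - p) ∂ν| = ‖∫ ω, (f (word n ω) - p) ∂ν‖ :=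
            (Real.norm_eq_abs _).symm
      _ ≤ ∫ ω, ‖f (word n ω) - p‖ ∂ν := norm_integral_le_integral_norm _
      _ = ∫ ω, |f (word n ω) - p| ∂ν := by
          apply integral_congr_ae
          exact Filter.Eventually.of_forall fun ω => Real.norm_eq_abs _
    have key2 : ∫ ω, |f (word n ω) - p| ∂ν
        ≤ ∫ ω, (ε + Set.indicator Dev (fun _ => (1:ℝ)) ω) ∂ν :=
      integral_mono hintabs hintind hpoint
    have key3 : ∫ ω, (ε + Set.indicator Dev (fun _ => (1:ℝ)) ω) ∂ν
        = ε + (ν Dev).toReal := by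
      rw [integral_add (integrable_const ε) ((integrable_const (1:ℝ)).indicator hmDev),
        integral_const]
      have : ∫ ω, Set.indicator Dev (fun _ => (1:ℝ)) ω ∂ν = (ν Dev).toReal :=
        integral_indicator_one hmDev
      rw [this]
      simp
    have : |q - p| ≤ ε + (ν Dev).toReal := le_trans key1 (key2.trans (le_of_eq key3))
    have h2ε : |q - p| = 2 * ε := by rw [hεdef]; ring
    linarith
  -- comparison
  have hcomp : (ν Dev).toReal ≤ Creal P δ n * (μ Dev).toReal := by
    have h := word_event_compare hker hδ hδP hsiμ hcμ hsiν hcν n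
      {u : Fin n → A | ε < |f u - ∫ ω', f (word n ω') ∂μ|}
    rw [← hDevS] at h
    have hne1 : ENNReal.ofReal (Creal P δ n) * μ Dev ≠ ⊤ :=
      ENNReal.mul_ne_top ENNReal.ofReal_ne_top (measure_ne_top μ _)
    have := ENNReal.toReal_mono hne1 h
    rwa [ENNReal.toReal_mul, ENNReal.toReal_ofReal (creal_nonneg hker hδ n)] at this
  have final : ε ≤ Creal P δ n * (C' * Real.exp (-(γ * m))) := by
    calc ε ≤ (ν Dev).toReal := hνDev
    _ ≤ Creal P δ n * (μ Dev).toReal := hcomp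
    _ ≤ Creal P δ n * (C * Real.exp (-(γ * m))) :=
        mul_le_mul_of_nonneg_left h1 (creal_nonneg hker hδ n)
    _ ≤ Creal P δ n * (C' * Real.exp (-(γ * m))) :=
        mul_le_mul_of_nonneg_left
          (mul_le_mul_of_nonneg_right hCC' (Real.exp_nonneg _)) (creal_nonneg hker hδ n)
  exact absurd (lt_of_le_of_lt final hsmall) (lt_irrefl ε)

end Main

section Ext

variable [MeasurableSingletonClass A] [Nontrivial A] {P : A → Past A → ℝ}
variable (hker : IsProbKernel P) {δ : ℝ} (hδ : 0 < δ) (hδP : ∀ a x, δ ≤ P a x)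
  (hcont : Tendsto (varRate P) atTop (nhds 0))
  {μ ν : Measure (ℤ → A)} [IsProbabilityMeasure μ] [IsProbabilityMeasure ν]
  (hsiμ : ShiftInvariant μ) (hcμ : Compatible P μ)
  (hsiν : ShiftInvariant ν) (hcν : Compatible P ν)
  (hconc : ConcExpRate μ)

def icyl (t₀ : ℤ) (k : ℕ) (φ : Fin k → A) : Set (ℤ → A) :=
  {ω | ∀ i : Fin k, ω (t₀ + ((i : ℕ) : ℤ)) = φ i}

lemma icyl_eq_zshift (t₀ : ℤ) (k : ℕ) (φ : Fin k → A) :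
    icyl t₀ k φ = zshift (t₀ - 1) ⁻¹' wcyl k φ := by
  ext ω
  simp only [icyl, wcyl, Set.mem_preimage, Set.mem_setOf_eq, zshift]
  apply forall_congr'
  intro i
  have h : ((i:ℕ):ℤ) + 1 + (t₀ - 1) = t₀ + ((i:ℕ):ℤ) := by ring
  rw [h]

lemma measurableSet_icyl (t₀ : ℤ) (k : ℕ) (φ : Fin k → A) : MeasurableSet (icyl t₀ k φ) := by
  rw [icyl_eq_zshift]
  exact measurable_zshift _ (measurableSet_wcyl _ _)

include hker hδ hδP hcont hsiμ hcμ hsiν hcν hconc in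
lemma icyl_measure_eq (t₀ : ℤ) (k : ℕ) (φ : Fin k → A) :
    ν (icyl t₀ k φ) = μ (icyl t₀ k φ) := by
  rw [icyl_eq_zshift, zshift_invariance hsiν _ (measurableSet_wcyl _ _),
    zshift_invariance hsiμ _ (measurableSet_wcyl _ _)]
  rcases Nat.eq_zero_or_pos k with hk | hk
  · subst hk
    have huniv : wcyl 0 φ = Set.univ := by
      ext ω; simp [wcyl]
    rw [huniv, measure_univ, measure_univ]
  · exact wcyl_eq hker hδ hδP hcont hsiμ hcμ hsiν hcν hconc hk φ

include hker hδ hδP hcont hsiμ hcμ hsiν hcν hconc in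
lemma exact_cylinder_eq (s : Finset ℤ) (φ : ℤ → A) :
    ν {ω : ℤ → A | ∀ i ∈ s, ω i = φ i} = μ {ω : ℤ → A | ∀ i ∈ s, ω i = φ i} := by
  classical
  rcases s.eq_empty_or_nonempty with hs | hs
  · subst hs
    have huniv : {ω : ℤ → A | ∀ i ∈ (∅ : Finset ℤ), ω i = φ i} = Set.univ := by
      ext ω; simp
    rw [huniv, measure_univ, measure_univ]
  · set t₀ := s.min' hs with ht₀
    set t₁ := s.max' hs with ht₁
    set k := (t₁ - t₀ + 1).toNat with hkdef
    have htle : t₀ ≤ t₁ := s.min'_le _ (s.max'_mem hs)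
    have hks : ∀ i ∈ s, ∃ j : Fin k, t₀ + ((j : ℕ) : ℤ) = i := by
      intro i hi
      have h1 : t₀ ≤ i := s.min'_le i hi
      have h2 : i ≤ t₁ := s.le_max' i hi
      refine ⟨⟨(i - t₀).toNat, by omega⟩, ?_⟩
      show t₀ + (((i - t₀).toNat : ℕ) : ℤ) = i
      omega
    set T := Finset.univ.filter (fun ψ : Fin k → A =>
      ∀ j : Fin k, (t₀ + ((j : ℕ) : ℤ)) ∈ s → ψ j = φ (t₀ + ((j : ℕ) : ℤ))) with hT
    have hdecomp : {ω : ℤ → A | ∀ i ∈ s, ω i = φ i} = ⋃ ψ ∈ T, icyl t₀ k ψ := by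
      ext ω
      simp only [Set.mem_setOf_eq, Set.mem_iUnion, hT, Finset.mem_filter, Finset.mem_univ,
        true_and]
      constructor
      · intro h
        refine ⟨fun j => ω (t₀ + ((j : ℕ) : ℤ)), fun j hj => h _ hj, fun j => rfl⟩
      · rintro ⟨ψ, hψ, hω⟩ i hi
        obtain ⟨j, hj⟩ := hks i hi
        rw [← hj, hω j, hψ j (hj ▸ hi)]
    have hdis : (↑T : Set (Fin k → A)).PairwiseDisjoint (fun ψ => icyl t₀ k ψ) := by
      intro ψ _ ψ' _ hne
      rw [Function.onFun, Set.disjoint_left]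
      intro ω h1 h2
      apply hne
      funext j
      rw [← h1 j, ← h2 j]
    rw [hdecomp, measure_biUnion_finset hdis (fun ψ _ => measurableSet_icyl t₀ k ψ),
      measure_biUnion_finset hdis (fun ψ _ => measurableSet_icyl t₀ k ψ)]
    exact Finset.sum_congr rfl fun ψ _ =>
      icyl_measure_eq hker hδ hδP hcont hsiμ hcμ hsiν hcν hconc t₀ k ψ

include hker hδ hδP hcont hsiμ hcμ hsiν hcν hconc in
lemma cylinder_measure_eq {E : Set (ℤ → A)}
    (hE : E ∈ measurableCylinders (fun _ : ℤ => A)) : ν E = μ E := by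
  classical
  obtain ⟨t, S, hS, rfl⟩ := (mem_measurableCylinders E).mp hE
  haveI : Nonempty A := inferInstance
  set ext : ((i : { x // x ∈ t }) → A) → ℤ → A := fun ψ i =>
    if h : i ∈ t then ψ ⟨i, h⟩ else Classical.arbitrary A with hext
  have hextval : ∀ (ψ : (i : { x // x ∈ t }) → A) (i : ℤ) (h : i ∈ t), ext ψ i = ψ ⟨i, h⟩ := by
    intro ψ i h
    rw [hext]
    show (if h' : i ∈ t then ψ ⟨i, h'⟩ else Classical.arbitrary A) = ψ ⟨i, h⟩
    rw [dif_pos h]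
  set TS := Finset.univ.filter (fun ψ : (i : { x // x ∈ t }) → A => ψ ∈ S) with hTS
  have hdecomp : cylinder t S = ⋃ ψ ∈ TS, {ω : ℤ → A | ∀ i ∈ t, ω i = ext ψ i} := by
    ext ω
    rw [mem_cylinder]
    simp only [Set.mem_iUnion, hTS, Finset.mem_filter, Finset.mem_univ, true_and,
      Set.mem_setOf_eq]
    constructor
    · intro h
      refine ⟨t.restrict ω, h, ?_⟩
      intro i hi
      rw [hextval _ i hi]
      rfl
    · rintro ⟨ψ, hψ, hω⟩
      have : t.restrict ω = ψ := by
        funext i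
        have h2 := hω (i : ℤ) i.2
        rw [hextval _ _ i.2] at h2
        exact h2
      rw [this]
      exact hψ
  have hdis : (↑TS : Set ((i : { x // x ∈ t }) → A)).PairwiseDisjoint
      (fun ψ => {ω : ℤ → A | ∀ i ∈ t, ω i = ext ψ i}) := by
    intro ψ _ ψ' _ hne
    rw [Function.onFun, Set.disjoint_left]
    intro ω h1 h2
    apply hne
    funext i
    have e1 := h1 (i : ℤ) i.2
    have e2 := h2 (i : ℤ) i.2
    rw [hextval _ _ i.2] at e1 e2
    rw [← e1, ← e2]
  have hmeas : ∀ ψ, MeasurableSet {ω : ℤ → A | ∀ i ∈ t, ω i = ext ψ i} := by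
    intro ψ
    have he : {ω : ℤ → A | ∀ i ∈ t, ω i = ext ψ i}
        = ⋂ i ∈ t, {ω : ℤ → A | ω i = ext ψ i} := by
      ext ω; simp
    rw [he]
    exact MeasurableSet.biInter (t : Set ℤ).to_countable
      (fun i _ => measurableSet_coord_eq i (ext ψ i))
  rw [hdecomp, measure_biUnion_finset hdis (fun ψ _ => hmeas ψ),
    measure_biUnion_finset hdis (fun ψ _ => hmeas ψ)]
  exact Finset.sum_congr rfl fun ψ _ =>
    exact_cylinder_eq hker hδ hδP hcont hsiμ hcμ hsiν hcν hconc t (ext ψ)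

include hker hδ hδP hcont hsiμ hcμ hsiν hcν hconc in
lemma measures_eq : ν = μ := by
  refine ext_of_generate_finite (measurableCylinders (fun _ : ℤ => A))
    generateFrom_measurableCylinders.symm isPiSystem_measurableCylinders ?_ ?_
  · intro s hs
    exact cylinder_measure_eq hker hδ hδP hcont hsiμ hcμ hsiν hcν hconc hs
  · rw [measure_univ, measure_univ]

end Ext


/-- **Theorem 4** (Gallo–Takahashi): if `P` is a regular kernel and `X` is a
stationary chain compatible with `P` satisfying concentration of measure at
exponential rate, then `X` is the unique stationary chain compatible with `P`. -/
theorem statement4 {A : Type*} [Fintype A] [MeasurableSpace A]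
    (P : A → Past A → ℝ) (hker : IsProbKernel P) (hreg : RegularKernel P)
    (μ : Measure (ℤ → A)) (hμ : StatChain P μ) (hconc : ConcExpRate μ) :
    ∀ ν : Measure (ℤ → A), StatChain P ν → ν = μ := by
  intro ν hν
  haveI : IsProbabilityMeasure μ := hμ.1
  haveI : IsProbabilityMeasure ν := hν.1
  obtain ⟨δ, hδ, hδP⟩ := hreg.2
  have hcont : Tendsto (varRate P) atTop (nhds 0) := hreg.1
  by_cases hnt : Nontrivial A
  · haveI := hnt
    haveI : MeasurableSingletonClass A :=
      ⟨singletons_measurable P hker hδ hδP hμ⟩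
    exact measures_eq hker hδ hδP hcont hμ.2.1 hμ.2.2 hν.2.1 hν.2.2 hconc
  · haveI : Subsingleton A := not_nontrivial_iff_subsingleton.mp hnt
    haveI : Subsingleton (ℤ → A) := inferInstance
    apply Measure.ext
    intro s hs
    rcases Set.eq_empty_or_nonempty s with rfl | ⟨x, hx⟩
    · simp
    · have hsu : s = Set.univ := by
        apply Set.eq_univ_of_forall
        intro y
        rwa [Subsingleton.elim y x]
      rw [hsu, measure_univ, measure_univ]


end GT
end

section
/- On A = {−1,+1}, for a past x different from the all-(+1) past let ℓ(x) := min{j ≥ 0 : x_{−j−1} = −1}, and given a monotonically nonincreasing sequence {p_i}_{i≥0} of values in [0,1] with limit p_∞, define the probability kernel P by P(−1|x) = p_{ℓ(x)} for x ≠ (+1,+1,…) and P(−1|+1̲) = p_∞. Then P is attractive, and for every k ≥ 1 the continuity rate satisfies var_k = p_k − p_∞; in particular var_k → 0, so P is continuous. -/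
open MeasureTheory ProbabilityTheory Filter ENNReal

namespace GT

variable {A : Type*} [Fintype A] [MeasurableSpace A]

open scoped Classical in
/-- The alphabet `{-1,+1}` is represented by `Bool`: `true ↦ +1`, `false ↦ -1`
(with the order `false < true` matching `-1 < +1`).
The kernel `P(-1|x) = p_{ℓ(x)}`, where `ℓ(x)` is the number of `+1`'s seen before the
first `-1` in the past `x`, and `P(-1| +1̲) = p_∞`. -/
noncomputable def ellP (p : ℕ → ℝ) (pinf : ℝ) : Bool → Past Bool → ℝ := fun a x =>
  let q : ℝ := if h : ∃ j, x j = false then p (Nat.find h) else pinf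
  if a then 1 - q else q

open scoped Classical in
lemma ellP_false (p : ℕ → ℝ) (pinf : ℝ) (x : Past Bool) :
    ellP p pinf false x = if h : ∃ j, x j = false then p (Nat.find h) else pinf := by
  simp [ellP]

lemma ellP_true (p : ℕ → ℝ) (pinf : ℝ) (x : Past Bool) :
    ellP p pinf true x = 1 - ellP p pinf false x := by
  simp [ellP]

lemma boolLeFalse {b : Bool} (h : b ≤ false) : b = false := le_antisymm h (Bool.false_le b)

section aux
variable {p : ℕ → ℝ} {pinf : ℝ}

lemma ellP_ge_pinf (hmono : Antitone p) (hlim : Tendsto p atTop (nhds pinf))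
    (x : Past Bool) : pinf ≤ ellP p pinf false x := by
  classical
  rw [ellP_false]
  split
  · exact hmono.le_of_tendsto hlim _
  · exact le_refl _

lemma ellP_anti (hmono : Antitone p) (hlim : Tendsto p atTop (nhds pinf))
    {x y : Past Bool} (hxy : x ≤ y) :
    ellP p pinf false y ≤ ellP p pinf false x := by
  classical
  by_cases hy : ∃ j, y j = false
  · have hx : ∃ j, x j = false := by
      obtain ⟨j, hj⟩ := hy
      exact ⟨j, GT.boolLeFalse (hj ▸ hxy j)⟩
    rw [ellP_false, ellP_false, dif_pos hy, dif_pos hx]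
    apply hmono
    apply Nat.find_le
    have h5 := hxy (Nat.find hy)
    rw [Nat.find_spec hy] at h5
    exact GT.boolLeFalse h5
  · rw [ellP_false (x := y), dif_neg hy]
    exact ellP_ge_pinf hmono hlim x

/-- If `x` and `y` agree on the first `k` coordinates and there is a `false` among
them, then the kernel values coincide. -/
lemma ellP_eq_of_agree {k : ℕ} {x y : Past Bool} (hagree : ∀ i < k, x i = y i)
    {j : ℕ} (hj : j < k) (hx : x j = false) :
    ellP p pinf false x = ellP p pinf false y := by
  classical
  have hex : ∃ j, x j = false := ⟨j, hx⟩
  have hey : ∃ j, y j = false := ⟨j, (hagree j hj).symm ▸ hx⟩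
  rw [ellP_false, ellP_false, dif_pos hex, dif_pos hey]
  congr 1
  have h1 : Nat.find hex < k := lt_of_le_of_lt (Nat.find_le hx) hj
  have h2 : Nat.find hey < k :=
    lt_of_le_of_lt (Nat.find_le ((hagree j hj).symm ▸ hx)) hj
  apply le_antisymm
  · exact Nat.find_le ((hagree _ h2 : x _ = y _) ▸ Nat.find_spec hey)
  · exact Nat.find_le ((hagree _ h1).symm ▸ Nat.find_spec hex)

/-- If the first `k` coordinates are all `true`, the kernel value lies in `[pinf, p k]`. -/
lemma ellP_le_of_true (hmono : Antitone p) (hlim : Tendsto p atTop (nhds pinf))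
    {k : ℕ} {x : Past Bool}
    (hx : ∀ i < k, x i = true) : ellP p pinf false x ≤ p k := by
  classical
  rw [ellP_false]
  split
  · rename_i hex
    apply hmono
    by_contra hlt
    exact absurd (hx _ (not_le.mp hlt)) (by simp [Nat.find_spec hex])
  · exact hmono.le_of_tendsto hlim k

end aux

/-- The house-of-cards-type example of Gallo–Takahashi: for a nonincreasing sequence
`{p_i} ⊆ [0,1]` with limit `p_∞`, the kernel `P(-1|x) = p_{ℓ(x)}` is attractive and
satisfies `var_k = p_k − p_∞` for all `k ≥ 1`; in particular it is continuous. -/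
theorem statement13 (p : ℕ → ℝ) (pinf : ℝ)
    (hmono : Antitone p) (hrange : ∀ i, p i ∈ Set.Icc (0 : ℝ) 1)
    (hlim : Tendsto p atTop (nhds pinf)) :
    Attractive (ellP p pinf) ∧
      (∀ k : ℕ, 1 ≤ k → varRate (ellP p pinf) k = p k - pinf) ∧
      ContinuousKernel (ellP p pinf) := by
  classical
  have hge : ∀ x, pinf ≤ ellP p pinf false x := ellP_ge_pinf hmono hlim
  have hpk : ∀ k, pinf ≤ p k := fun k => hmono.le_of_tendsto hlim k
  -- the upper bound on the oscillation
  have key : ∀ k, 1 ≤ k → ∀ d ∈ {d | ∃ (b : Bool) (x y : Past Bool),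
      (∀ i < k, x i = y i) ∧ d = |ellP p pinf b x - ellP p pinf b y|},
      d ≤ p k - pinf := by
    intro k hk d hd
    obtain ⟨b, x, y, hagree, rfl⟩ := hd
    have habs : |ellP p pinf b x - ellP p pinf b y|
        = |ellP p pinf false x - ellP p pinf false y| := by
      cases b
      · rfl
      · rw [ellP_true, ellP_true,
          show (1 - ellP p pinf false x) - (1 - ellP p pinf false y)
            = -(ellP p pinf false x - ellP p pinf false y) by ring, abs_neg]
    rw [habs]
    by_cases hall : ∀ i < k, x i = true
    · have hally : ∀ i < k, y i = true := fun i hi => (hagree i hi) ▸ hall i hi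
      have h1 := ellP_le_of_true hmono hlim hall
      have h2 := ellP_le_of_true hmono hlim hally
      have h3 := hge x; have h4 := hge y
      rw [abs_sub_le_iff]
      constructor <;> linarith
    · push_neg at hall
      obtain ⟨j, hj, hxj⟩ := hall
      rw [ellP_eq_of_agree hagree hj (by simpa using hxj), sub_self, abs_zero]
      linarith [hpk k]
  have hvar : ∀ k : ℕ, 1 ≤ k → varRate (ellP p pinf) k = p k - pinf := by
    intro k hk
    unfold varRate
    apply le_antisymm
    · exact Real.sSup_le (key k hk) (by linarith [hpk k])
    · apply le_csSup ⟨p k - pinf, key k hk⟩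
      refine ⟨false, (fun i => decide (i ≠ k)), (fun _ => true), fun i hi => ?_, ?_⟩
      · simp [Nat.ne_of_lt hi]
      · have hex : ∃ j, (fun i => (decide (i ≠ k))) j = false := ⟨k, by simp⟩
        have hfind : Nat.find hex = k :=
          Nat.find_eq_iff hex |>.mpr ⟨by simp, fun m hm => by simp [Nat.ne_of_lt hm]⟩
        rw [ellP_false, ellP_false, dif_pos hex, dif_neg (by simp), hfind,
          abs_of_nonneg (by linarith [hpk k])]
  refine ⟨?_, hvar, ?_⟩
  · intro a
    cases a
    · have h1 : ∀ z : Past Bool,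
          (∑ b ∈ Finset.univ.filter (fun b => false ≤ b), ellP p pinf b z) = 1 := by
        intro z
        rw [Finset.filter_true_of_mem (fun b _ => Bool.false_le b), Fintype.sum_bool,
          ellP_true]
        ring
      simp only [h1]
      exact monotone_const
    · intro x y hxy
      have hf : Finset.univ.filter (fun b => true ≤ b) = {true} := by
        ext b; cases b <;> simp
      simp only [hf, Finset.sum_singleton, ellP_true]
      linarith [ellP_anti hmono hlim hxy]
  · have h0 : Tendsto (fun k => p k - pinf) atTop (nhds 0) := by
      simpa using hlim.sub (tendsto_const_nhds (x := pinf))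
    exact Tendsto.congr'
      (by filter_upwards [eventually_ge_atTop 1] with k hk; exact (hvar k hk).symm) h0

end GT
end
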